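/- With Δ̃ = {(m,l) | m ∈ Δ, l ≥ ȟ'(m)} ⊆ M_ℝ × ℝ, its normal fan Σ̃ ⊆ N_ℝ × ℝ consists exactly of: (i) cones C(σ*) × {0} for faces σ* of Δ*; (ii) cones C(σ*) × {0} + C(τ × {1}) for faces σ* of Δ* and τ of ∇^{ȟ'} with σ* + τ a face of Δ* + ∇^{ȟ'}; and (iii) cones C(τ × {1}) for faces τ of ∇^{ȟ'}. -/

import Mathlib

open scoped Pointwise

namespace BB

abbrev V (n : ℕ) : Type := Fin n → ℝ

/-- The standard pairing between `M_ℝ` and `N_ℝ` (both identified with `ℝⁿ`). -/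
def pair {n : ℕ} (m v : V n) : ℝ := ∑ i, m i * v i

-- pair lemmas
lemma pair_comm {n : ℕ} (m v : V n) : pair m v = pair v m := by
  simp [pair, mul_comm]

lemma pair_add_left {n : ℕ} (a b c : V n) : pair (a + b) c = pair a c + pair b c := by
  simp [pair, add_mul, Finset.sum_add_distrib]

lemma pair_add_right {n : ℕ} (a b c : V n) : pair a (b + c) = pair a b + pair a c := by
  simp [pair, mul_add, Finset.sum_add_distrib]

lemma pair_smul_left {n : ℕ} (c : ℝ) (a b : V n) : pair (c • a) b = c * pair a b := by
  simp [pair, Finset.mul_sum, mul_assoc]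

lemma pair_smul_right {n : ℕ} (c : ℝ) (a b : V n) : pair a (c • b) = c * pair a b := by
  simp only [pair, Pi.smul_apply, smul_eq_mul, Finset.mul_sum]
  exact Finset.sum_congr rfl fun i _ => by ring

lemma pair_zero_left {n : ℕ} (b : V n) : pair 0 b = 0 := by simp [pair]

lemma pair_zero_right {n : ℕ} (b : V n) : pair b 0 = 0 := by simp [pair]

lemma pair_sub_left {n : ℕ} (a b c : V n) : pair (a - b) c = pair a c - pair b c := by
  simp [pair, sub_mul, Finset.sum_sub_distrib]

lemma pair_sub_right {n : ℕ} (a b c : V n) : pair a (b - c) = pair a b - pair a c := by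
  simp [pair, mul_sub, Finset.sum_sub_distrib]

lemma pair_self_pos {n : ℕ} {w : V n} (hw : w ≠ 0) : 0 < pair w w := by
  have h : ∃ i, w i ≠ 0 := by
    by_contra h
    push_neg at h
    exact hw (funext h)
  obtain ⟨i, hi⟩ := h
  have : ∀ j ∈ Finset.univ, 0 ≤ w j * w j := fun j _ => mul_self_nonneg _
  calc (0:ℝ) < w i * w i := mul_self_pos.mpr hi
    _ ≤ ∑ j, w j * w j := Finset.single_le_sum this (Finset.mem_univ i)

noncomputable def pairCLM {n : ℕ} (m : V n) : V n →L[ℝ] ℝ := ∑ i, m i • ContinuousLinearMap.proj i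

@[simp] lemma pairCLM_apply {n : ℕ} (m x : V n) : pairCLM m x = pair m x := by
  simp [pairCLM, pair, ContinuousLinearMap.sum_apply]

lemma continuous_pair_left {n : ℕ} (m : V n) : Continuous (fun x => pair m x) := by
  have h := (pairCLM m).continuous
  have : (fun x => pair m x) = ⇑(pairCLM m) := by ext x; simp
  rw [this]; exact h

lemma continuous_pair_right {n : ℕ} (m : V n) : Continuous (fun x => pair x m) := by
  have h := continuous_pair_left m
  simpa [pair_comm] using h

lemma exists_rep {n : ℕ} (ℓ : V n →L[ℝ] ℝ) : ∃ m : V n, ∀ x, ℓ x = pair m x := by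
  refine ⟨fun i => ℓ (Pi.single i 1), fun x => ?_⟩
  have hx : x = ∑ i, x i • (Pi.single i (1:ℝ) : V n) := by
    ext j
    simp [Pi.single_apply]
  conv_lhs => rw [hx]
  rw [map_sum]
  simp [pair, mul_comm]


/-- A point of `ℝⁿ` is a lattice point if all its coordinates are integers. -/
def IsLatticePt {n : ℕ} (m : V n) : Prop := ∀ i, ∃ z : ℤ, m i = (z : ℝ)

/-- A lattice polytope: convex hull of finitely many lattice points. -/
def IsLatticePolytope {n : ℕ} (P : Set (V n)) : Prop :=
  ∃ S : Finset (V n), (∀ m ∈ S, IsLatticePt m) ∧ P = convexHull ℝ (S : Set (V n))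

/-- The polar dual `P* = {v | ⟨m,v⟩ ≥ -1 for all m ∈ P}`. -/
def polar {n : ℕ} (P : Set (V n)) : Set (V n) := {v | ∀ m ∈ P, -1 ≤ pair m v}

/-- A reflexive polytope: a lattice polytope with `0` in its interior whose polar
dual is again a lattice polytope. -/
def IsReflexive {n : ℕ} (P : Set (V n)) : Prop :=
  IsLatticePolytope P ∧ (0 : V n) ∈ interior P ∧ IsLatticePolytope (polar P)

/-- The support function `supp P v = -inf{⟨m,v⟩ | m ∈ P}`; for `P = Δᵢ` and `v ∈ N_ℝ`
this is the piecewise linear function `φᵢ(v)` of the nef-partition. -/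
noncomputable def supp {n : ℕ} (P : Set (V n)) (v : V n) : ℝ :=
  sSup ((fun m => -(pair m v)) '' P)

end BB


namespace BB

/-- The pairing on `(M_ℝ ⊕ ℝ) × (N_ℝ ⊕ ℝ)`. -/
def pairP {n : ℕ} (p q : V n × ℝ) : ℝ := pair p.1 q.1 + p.2 * q.2

/-- The cone over a set, with vertex the origin. -/
def cone0 {E : Type*} [AddCommMonoid E] [Module ℝ E] (S : Set E) : Set E :=
  {x | ∃ c : ℝ, 0 ≤ c ∧ ∃ s ∈ S, x = c • s}

/-- `F` is a face of the convex set `P` (an exposed subset). -/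
def IsFaceOf {E : Type*} [TopologicalSpace E] [AddCommMonoid E] [Module ℝ E]
    (F P : Set E) : Prop := IsExposed ℝ P F

/-- The normal cone `N_P(F)` of the (possibly unbounded) polyhedron
`P ⊆ M_ℝ × ℝ` along `F`. -/
def normalConeP {n : ℕ} (P F : Set (V n × ℝ)) : Set (V n × ℝ) :=
  {y | ∀ f ∈ F, ∀ p ∈ P, pairP y f ≤ pairP y p}

noncomputable def pairPCLM {n : ℕ} (y : V n × ℝ) : V n × ℝ →L[ℝ] ℝ :=
  (pairCLM y.1).comp (ContinuousLinearMap.fst ℝ (V n) ℝ) + y.2 • (ContinuousLinearMap.snd ℝ (V n) ℝ)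

@[simp] lemma pairPCLM_apply {n : ℕ} (y p : V n × ℝ) : pairPCLM y p = pairP y p := by
  simp [pairPCLM, pairP, mul_comm]

lemma exists_repP {n : ℕ} (ℓ : V n × ℝ →L[ℝ] ℝ) : ∃ y : V n × ℝ, ∀ p, ℓ p = pairP y p := by
  obtain ⟨m, hm⟩ := exists_rep (ℓ.comp (ContinuousLinearMap.inl ℝ (V n) ℝ))
  refine ⟨(m, ℓ (0,1)), fun p => ?_⟩
  have hp : (p : V n × ℝ) = ((p.1, 0) : V n × ℝ) + p.2 • (((0:V n),(1:ℝ)) : V n × ℝ) := by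
    ext <;> simp
  rw [hp, map_add, map_smul]
  have h1 := hm p.1
  simp only [ContinuousLinearMap.comp_apply, ContinuousLinearMap.inl_apply] at h1
  simp [pairP, h1, mul_comm]

lemma pairP_def {n : ℕ} (y p : V n × ℝ) : pairP y p = pair y.1 p.1 + y.2 * p.2 := rfl

lemma zero_mem_cone0 {E : Type*} [AddCommMonoid E] [Module ℝ E] {S : Set E}
    (h : S.Nonempty) : (0 : E) ∈ cone0 S := by
  obtain ⟨s, hs⟩ := h
  exact ⟨0, le_refl _, s, hs, (zero_smul ℝ s).symm⟩

lemma smul_mem_cone0 {E : Type*} [AddCommMonoid E] [Module ℝ E] {S : Set E}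
    {s : E} (hs : s ∈ S) {c : ℝ} (hc : 0 ≤ c) : c • s ∈ cone0 S :=
  ⟨c, hc, s, hs, rfl⟩

lemma mem_cone0_prod_zero {n : ℕ} (A : Set (V n)) (y : V n × ℝ) :
    y ∈ cone0 (A ×ˢ ({0} : Set ℝ)) ↔ y.1 ∈ cone0 A ∧ y.2 = 0 := by
  constructor
  · rintro ⟨c, hc, ⟨a, t⟩, ⟨ha, ht⟩, rfl⟩
    simp only [Set.mem_singleton_iff] at ht
    subst ht
    exact ⟨⟨c, hc, a, ha, rfl⟩, by simp⟩
  · rintro ⟨⟨c, hc, a, ha, h1⟩, h2⟩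
    refine ⟨c, hc, (a, 0), ⟨ha, rfl⟩, ?_⟩
    ext
    · simpa using congrFun h1 _
    · simpa using h2

lemma mem_cone0_prod_one {n : ℕ} (B : Set (V n)) (y : V n × ℝ) :
    y ∈ cone0 (B ×ˢ ({1} : Set ℝ)) ↔ 0 ≤ y.2 ∧ ∃ q ∈ B, y.1 = y.2 • q := by
  constructor
  · rintro ⟨c, hc, ⟨a, t⟩, ⟨ha, ht⟩, rfl⟩
    simp only [Set.mem_singleton_iff] at ht
    subst ht
    exact ⟨by simpa using hc, a, ha, by simp⟩
  · rintro ⟨hc, q, hq, h1⟩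
    exact ⟨y.2, hc, (q, 1), ⟨hq, rfl⟩, by ext <;> simp [h1]⟩

lemma relint_line {E : Type*} [NormedAddCommGroup E] [NormedSpace ℝ E] {K : Set E} {x₀ y : E}
    (hx : x₀ ∈ intrinsicInterior ℝ K) (hy : y ∈ K) :
    ∃ ε : ℝ, 0 < ε ∧ ε • (x₀ - y) + x₀ ∈ K := by
  obtain ⟨z, hz, hzx⟩ := hx
  have hyspan : y ∈ affineSpan ℝ K := subset_affineSpan ℝ K hy
  have hzspan : (z : E) ∈ affineSpan ℝ K := z.2
  have hmem : ∀ t : ℝ, t • ((z : E) - y) + (z : E) ∈ affineSpan ℝ K := fun t =>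
    AffineSubspace.smul_vsub_vadd_mem _ t hzspan hyspan hzspan
  set γ : ℝ → affineSpan ℝ K := fun t => ⟨t • ((z : E) - y) + (z : E), hmem t⟩ with hγ
  have hcont : Continuous γ := by
    apply Continuous.subtype_mk
    exact (continuous_id.smul continuous_const).add continuous_const
  have hopen : IsOpen (γ ⁻¹' interior ((↑) ⁻¹' K : Set (affineSpan ℝ K))) :=
    isOpen_interior.preimage hcont
  have h0 : (0 : ℝ) ∈ γ ⁻¹' interior ((↑) ⁻¹' K : Set (affineSpan ℝ K)) := by
    have : γ 0 = z := by
      apply Subtype.ext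
      simp [hγ]
    simpa [this] using hz
  obtain ⟨δ, hδ, hball⟩ := Metric.isOpen_iff.mp hopen 0 h0
  refine ⟨δ/2, by positivity, ?_⟩
  have : γ (δ/2) ∈ interior ((↑) ⁻¹' K : Set (affineSpan ℝ K)) := by
    apply hball
    simp only [Metric.mem_ball, dist_zero_right, Real.norm_eq_abs]
    rw [abs_of_pos (by positivity)]
    linarith
  have h2 : γ (δ/2) ∈ ((↑) ⁻¹' K : Set (affineSpan ℝ K)) := interior_subset this
  simpa [hγ, hzx] using h2

lemma relint_min {n : ℕ} {K : Set (V n)} {x₀ : V n}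
    (hx : x₀ ∈ intrinsicInterior ℝ K) (w : V n) (c : ℝ)
    (hlb : ∀ z ∈ K, c ≤ pair z w) (heq : pair x₀ w = c) :
    ∀ y ∈ K, pair y w = c := by
  intro y hy
  obtain ⟨ε, hε, hmem⟩ := relint_line hx hy
  have h1 := hlb _ hmem
  rw [pair_add_left, pair_smul_left, pair_sub_left, heq] at h1
  have h2 : pair y w ≤ c := by nlinarith
  exact le_antisymm h2 (hlb y hy)

lemma continuous_finset_sup' {nn : ℕ} {ι : Type*} {F : Finset ι} (hF : F.Nonempty) (φ : ι → V nn → ℝ)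
    (hφ : ∀ i, Continuous (φ i)) : Continuous fun x => F.sup' hF fun i => φ i x := by
  induction hF using Finset.Nonempty.cons_induction with
  | singleton a => simpa using hφ a
  | cons a s ha hs ih =>
      have : (fun x => (Finset.cons a s ha).sup' (Finset.cons_nonempty ha) fun i => φ i x)
          = fun x => max (φ a x) (s.sup' hs fun i => φ i x) := by
        ext x; rw [Finset.sup'_cons]
      rw [this]
      exact (hφ a).max ih

lemma pair_abs_le {nn : ℕ} {m w : V nn} : |pair m w| ≤ (nn : ℝ) * ‖m‖ * ‖w‖ := by
  calc |pair m w| ≤ ∑ i, |m i * w i| := Finset.abs_sum_le_sum_abs _ _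
    _ ≤ ∑ _i : Fin nn, ‖m‖ * ‖w‖ := by
        apply Finset.sum_le_sum
        intro i _
        rw [abs_mul]
        have h1 : |m i| ≤ ‖m‖ := norm_le_pi_norm m i
        have h2 : |w i| ≤ ‖w‖ := norm_le_pi_norm w i
        exact mul_le_mul h1 h2 (abs_nonneg _) (norm_nonneg _)
    _ = (nn : ℝ) * ‖m‖ * ‖w‖ := by simp [Finset.sum_const, mul_assoc]

structure Setup (n : ℕ) where
  Δ : Set (V n)
  hk : V n → ℝ
  F : Finset (V n)
  hFne : F.Nonempty
  hpl : ∀ x, hk x = F.sup' hFne fun f => -(pair x f)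
  Q : Set (V n)
  hQ : Q = {v : V n | ∀ m, -(hk m) ≤ pair m v}
  h0Q : (0 : V n) ∈ Q
  Sfin : Finset (V n)
  hSfin : Δ = convexHull ℝ (Sfin : Set (V n))
  Pfin : Finset (V n)
  hPfin : polar Δ = convexHull ℝ (Pfin : Set (V n))
  h0int : (0 : V n) ∈ interior Δ

namespace Setup

variable {n : ℕ} (S : Setup n)

lemma convex_Δ : Convex ℝ S.Δ := S.hSfin ▸ convex_convexHull ℝ _

lemma compact_Δ : IsCompact S.Δ := S.hSfin ▸ S.Sfin.finite_toSet.isCompact_convexHull ℝ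

lemma closed_Δ : IsClosed S.Δ := S.compact_Δ.isClosed

lemma zero_mem_Δ : (0 : V n) ∈ S.Δ := interior_subset S.h0int

lemma nonempty_Δ : S.Δ.Nonempty := ⟨0, S.zero_mem_Δ⟩

lemma convex_P : Convex ℝ (polar S.Δ) := S.hPfin ▸ convex_convexHull ℝ _

lemma compact_P : IsCompact (polar S.Δ) := S.hPfin ▸ S.Pfin.finite_toSet.isCompact_convexHull ℝ

lemma closed_P : IsClosed (polar S.Δ) := S.compact_P.isClosed

lemma zero_mem_P : (0 : V n) ∈ polar S.Δ := by
  intro m _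
  rw [pair_zero_right]
  norm_num

lemma nonempty_P : (polar S.Δ).Nonempty := ⟨0, S.zero_mem_P⟩

lemma hk_zero : S.hk 0 = 0 := by
  rw [S.hpl]
  have : ∀ f ∈ S.F, -(pair (0 : V n) f) = (0:ℝ) := by
    intro f _
    rw [pair_zero_left]; ring
  rw [Finset.sup'_congr S.hFne rfl this, Finset.sup'_const]

lemma hk_smul {c : ℝ} (hc : 0 ≤ c) (x : V n) : S.hk (c • x) = c * S.hk x := by
  rw [S.hpl, S.hpl]
  rw [Finset.comp_sup'_eq_sup'_comp S.hFne (fun r => c * r)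
    (fun a b => mul_max_of_nonneg a b hc)]
  apply Finset.sup'_congr S.hFne rfl
  intro f _
  simp only [Function.comp_apply, pair_smul_left]
  ring

lemma hk_cont : Continuous S.hk := by
  have : S.hk = fun x => S.F.sup' S.hFne fun f => -(pair x f) := funext S.hpl
  rw [this]
  exact continuous_finset_sup' S.hFne _ fun f => (continuous_pair_right f).neg

lemma pairQ {q : V n} (hq : q ∈ S.Q) (m : V n) : -(S.hk m) ≤ pair m q := by
  rw [S.hQ] at hq
  exact hq m

lemma mem_Q_iff {q : V n} : q ∈ S.Q ↔ ∀ m, -(S.hk m) ≤ pair m q := by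
  rw [S.hQ]; rfl

lemma exists_attainQ (m : V n) : ∃ q ∈ S.Q, pair m q = -(S.hk m) := by
  obtain ⟨f, hf, heq⟩ := Finset.exists_mem_eq_sup' S.hFne fun f => -(pair m f)
  refine ⟨f, ?_, ?_⟩
  · rw [S.hQ]
    intro m'
    have := Finset.le_sup' (fun f => -(pair m' f)) hf
    rw [← S.hpl] at this
    linarith
  · rw [S.hpl, heq]; ring

lemma convex_Q : Convex ℝ S.Q := by
  rw [S.hQ]
  intro v hv w hw a b ha hb hab
  intro m
  have h1 := hv m
  have h2 := hw m
  simp only [Set.mem_setOf_eq] at *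
  rw [pair_add_right, pair_smul_right, pair_smul_right]
  have e1 : a * (-S.hk m) ≤ a * pair m v := mul_le_mul_of_nonneg_left h1 ha
  have e2 : b * (-S.hk m) ≤ b * pair m w := mul_le_mul_of_nonneg_left h2 hb
  have e3 : a * (-S.hk m) + b * (-S.hk m) = -S.hk m := by rw [← add_mul, hab]; ring
  linarith

lemma closed_Q : IsClosed S.Q := by
  have : S.Q = ⋂ m, {v : V n | -(S.hk m) ≤ pair m v} := by
    rw [S.hQ]; ext v; simp [Set.mem_iInter]
  rw [this]
  exact isClosed_iInter fun m => isClosed_le continuous_const (continuous_pair_left m)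

lemma compact_Q : IsCompact S.Q := by
  apply Metric.isCompact_of_isClosed_isBounded S.closed_Q
  rw [Metric.isBounded_iff_subset_closedBall 0]
  set C : ℝ := ∑ i : Fin n, (|S.hk (Pi.single i 1)| + |S.hk (-Pi.single i 1)|) with hC
  have hC0 : 0 ≤ C := Finset.sum_nonneg fun i _ => by positivity
  refine ⟨C, fun q hq => ?_⟩
  simp only [Metric.mem_closedBall, dist_zero_right]
  rw [pi_norm_le_iff_of_nonneg hC0]
  intro i
  have h1 := S.pairQ hq (Pi.single i 1)
  have h2 := S.pairQ hq (-Pi.single i 1)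
  have e1 : pair (Pi.single i 1) q = q i := by
    simp [pair, Pi.single_apply, Finset.sum_ite_eq]
  have e2 : pair (-Pi.single i 1) q = -(q i) := by
    have : pair (-Pi.single i 1) q = -(pair (Pi.single i 1) q) := by
      simp [pair, Finset.sum_neg_distrib]
    rw [this, e1]
  rw [e1] at h1
  rw [e2] at h2
  rw [Real.norm_eq_abs, abs_le]
  have hsum : |S.hk (Pi.single i 1)| + |S.hk (-Pi.single i 1)| ≤ C :=
    Finset.single_le_sum (f := fun i => |S.hk (Pi.single i 1)| + |S.hk (-Pi.single i 1)|)
      (fun j _ => by positivity) (Finset.mem_univ i)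
  constructor
  · linarith [le_abs_self (S.hk (Pi.single i 1)), abs_nonneg (S.hk (-Pi.single i 1))]
  · linarith [le_abs_self (S.hk (-Pi.single i 1)), abs_nonneg (S.hk (Pi.single i 1))]

lemma nonempty_Q : S.Q.Nonempty := ⟨0, S.h0Q⟩

lemma ball_sub : ∃ ε : ℝ, 0 < ε ∧ ∀ x : V n, ‖x‖ < ε → x ∈ S.Δ := by
  have := mem_interior_iff_mem_nhds.mp S.h0int
  obtain ⟨ε, hε, hball⟩ := Metric.mem_nhds_iff.mp this
  exact ⟨ε, hε, fun x hx => hball (by simpa [Metric.mem_ball, dist_zero_right] using hx)⟩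

lemma min_neg {w : V n} (hw : w ≠ 0) : ∃ m ∈ S.Δ, pair m w < 0 := by
  obtain ⟨ε, hε, hball⟩ := S.ball_sub
  have hwn : 0 < ‖w‖ := norm_pos_iff.mpr hw
  set c : ℝ := ε / (2 * ‖w‖) with hc
  have hc0 : 0 < c := by positivity
  refine ⟨(-c) • w, hball _ ?_, ?_⟩
  · have hn : ‖(-c) • w‖ = c * ‖w‖ := by
      rw [norm_smul]
      simp [Real.norm_eq_abs, abs_of_pos hc0]
    rw [hn, hc]
    have he : ε / (2 * ‖w‖) * ‖w‖ = ε / 2 := by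
      field_simp
    rw [he]
    linarith
  · rw [pair_smul_left]
    have := pair_self_pos hw
    nlinarith

lemma exists_minOn {K : Set (V n)} (hK : IsCompact K) (hne : K.Nonempty) {f : V n → ℝ}
    (hf : Continuous f) : ∃ x ∈ K, ∀ y ∈ K, f x ≤ f y := by
  obtain ⟨x, hx, hmin⟩ := hK.exists_isMinOn hne hf.continuousOn
  exact ⟨x, hx, fun y hy => hmin hy⟩

lemma bipolar : {m : V n | ∀ w ∈ polar S.Δ, -1 ≤ pair m w} = S.Δ := by
  apply Set.Subset.antisymm
  · intro m₀ hm₀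
    by_contra hm
    obtain ⟨ℓ, u, hlt, hgt⟩ := geometric_hahn_banach_closed_point S.convex_Δ S.closed_Δ hm
    obtain ⟨w₀, hw₀⟩ := exists_rep ℓ
    have h0u : 0 < u := by
      have := hlt 0 S.zero_mem_Δ
      rw [hw₀, pair_zero_right] at this
      linarith
    have hneg : -(1/u) < 0 := by
      simp only [neg_neg, neg_lt, neg_zero]
      positivity
    have hu : -(1/u) * u = -1 := by field_simp
    have hwP : (-(1/u)) • w₀ ∈ polar S.Δ := by
      intro m hmΔ
      have h1 : pair w₀ m < u := by rw [← hw₀]; exact hlt m hmΔ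
      rw [pair_smul_right, pair_comm]
      have h2 := mul_lt_mul_of_neg_left h1 hneg
      linarith
    have hthis := hm₀ _ hwP
    rw [pair_smul_right, pair_comm] at hthis
    have hgt' : u < pair w₀ m₀ := by rw [← hw₀]; exact hgt
    have h3 := mul_lt_mul_of_neg_left hgt' hneg
    linarith
  · intro m hm w hw
    exact hw m hm

lemma zero_int_P : (0 : V n) ∈ interior (polar S.Δ) := by
  obtain ⟨R, hR⟩ := (Metric.isBounded_iff_subset_closedBall 0).mp S.compact_Δ.isBounded
  have hR0 : 0 ≤ max R 0 := le_max_right _ _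
  set R' := max R 0 with hR'
  set ε : ℝ := 1 / ((n : ℝ) * R' + 1) with hε
  have hε0 : 0 < ε := by positivity
  apply mem_interior.mpr
  refine ⟨Metric.ball 0 ε, ?_, Metric.isOpen_ball, Metric.mem_ball_self hε0⟩
  intro w hw
  simp only [Metric.mem_ball, dist_zero_right] at hw
  intro m hm
  have hmR : ‖m‖ ≤ R' := by
    have := hR hm
    simp only [Metric.mem_closedBall, dist_zero_right] at this
    exact le_trans this (le_max_left _ _)
  have habs : |pair m w| ≤ (n : ℝ) * ‖m‖ * ‖w‖ := pair_abs_le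
  have h1 : (n : ℝ) * ‖m‖ * ‖w‖ < 1 := by
    have hn0 : (0:ℝ) ≤ (n:ℝ) := Nat.cast_nonneg n
    have h2 : (n : ℝ) * ‖m‖ ≤ (n : ℝ) * R' := by
      apply mul_le_mul_of_nonneg_left hmR hn0
    have h3 : (n : ℝ) * ‖m‖ * ‖w‖ ≤ ((n : ℝ) * R' + 1) * ‖w‖ := by
      apply mul_le_mul_of_nonneg_right _ (norm_nonneg w)
      linarith
    have h4 : ((n : ℝ) * R' + 1) * ‖w‖ < ((n : ℝ) * R' + 1) * ε := by
      apply mul_lt_mul_of_pos_left hw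
      positivity
    have h5 : ((n : ℝ) * R' + 1) * ε = 1 := by
      rw [hε]; field_simp
    linarith
  have h2 : |pair m w| ≤ 1 := le_of_lt (lt_of_le_of_lt habs h1)
  linarith [(abs_le.mp h2).1]

end Setup

lemma exposed_eq_of_interior_mem {E : Type*} [NormedAddCommGroup E] [NormedSpace ℝ E]
    {A B : Set E} (hAB : IsExposed ℝ A B) {x₀ : E} (hx : x₀ ∈ interior A) (hxB : x₀ ∈ B) :
    B = A := by
  obtain ⟨ℓ, hB⟩ := hAB ⟨x₀, hxB⟩
  have hmax : ∀ y ∈ A, ℓ y ≤ ℓ x₀ := by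
    rw [hB] at hxB
    exact hxB.2
  have hconst : ∀ y ∈ A, ℓ y = ℓ x₀ := by
    intro y hy
    refine le_antisymm (hmax y hy) ?_
    obtain ⟨δ, hδ, hball⟩ := Metric.isOpen_iff.mp isOpen_interior x₀ hx
    by_cases hxy : x₀ = y
    · rw [hxy]
    have hne : x₀ - y ≠ 0 := sub_ne_zero.mpr hxy
    have hnorm : 0 < ‖x₀ - y‖ := norm_pos_iff.mpr hne
    set t : ℝ := δ / (2 * ‖x₀ - y‖) with ht
    have ht0 : 0 < t := by positivity
    have hmem : x₀ + t • (x₀ - y) ∈ A := by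
      apply interior_subset
      apply hball
      simp only [Metric.mem_ball, dist_eq_norm]
      have : x₀ + t • (x₀ - y) - x₀ = t • (x₀ - y) := by abel
      rw [this, norm_smul, Real.norm_eq_abs, abs_of_pos ht0, ht]
      rw [div_mul_eq_mul_div, mul_comm]
      calc ‖x₀ - y‖ * δ / (2 * ‖x₀ - y‖) = δ / 2 := by field_simp
        _ < δ := by linarith
    have := hmax _ hmem
    rw [map_add, map_smul] at this
    have h2 : t • ℓ (x₀ - y) ≤ 0 := by linarith
    rw [map_sub, smul_eq_mul] at h2
    nlinarith
  rw [hB]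
  ext y
  simp only [Set.mem_setOf_eq]
  refine ⟨fun h => h.1, fun hy => ⟨hy, fun z hz => ?_⟩⟩
  rw [hconst y hy]
  exact hmax z hz


namespace Setup

variable {n : ℕ} (S : Setup n)

/-- argmin of `⟨·,w⟩` on `Δ`. -/
def SΔ (w : V n) : Set (V n) := {m ∈ S.Δ | ∀ m' ∈ S.Δ, pair m w ≤ pair m' w}

/-- argmin of `⟨m₀,·⟩` on `polar Δ`. -/
def SP (m₀ : V n) : Set (V n) := {w ∈ polar S.Δ | ∀ w' ∈ polar S.Δ, pair m₀ w ≤ pair m₀ w'}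

/-- argmin of `⟨m₀,·⟩` on `Q`. -/
def SQ (m₀ : V n) : Set (V n) := {q ∈ S.Q | ∀ q' ∈ S.Q, pair m₀ q ≤ pair m₀ q'}

/-- argmin of `⟨·,u⟩ + hk` on `Δ`. -/
def G (u : V n) : Set (V n) :=
  {m ∈ S.Δ | ∀ m' ∈ S.Δ, pair m u + S.hk m ≤ pair m' u + S.hk m'}

/-- dual face in `polar Δ` of a subset `T ⊆ Δ`. -/
def D (T : Set (V n)) : Set (V n) := {w ∈ polar S.Δ | ∀ m ∈ T, pair m w = -1}

/-- dual face in `Q` of a subset `T ⊆ Δ`. -/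
def TQ (T : Set (V n)) : Set (V n) := {q ∈ S.Q | ∀ m ∈ T, pair m q = -(S.hk m)}

lemma SΔ_nonempty (w : V n) : (S.SΔ w).Nonempty :=
  exists_minOn S.compact_Δ S.nonempty_Δ (continuous_pair_right w)

lemma G_nonempty (u : V n) : (S.G u).Nonempty :=
  exists_minOn S.compact_Δ S.nonempty_Δ ((continuous_pair_right u).add S.hk_cont)

lemma SQ_nonempty (m₀ : V n) : (S.SQ m₀).Nonempty :=
  exists_minOn S.compact_Q S.nonempty_Q (continuous_pair_left m₀)

lemma SP_nonempty (m₀ : V n) : (S.SP m₀).Nonempty :=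
  exists_minOn S.compact_P S.nonempty_P (continuous_pair_left m₀)

lemma SΔ_subset (w : V n) : S.SΔ w ⊆ S.Δ := fun _ h => h.1

lemma G_subset (u : V n) : S.G u ⊆ S.Δ := fun _ h => h.1

lemma SΔ_convex (w : V n) : Convex ℝ (S.SΔ w) := by
  intro x hx y hy a b ha hb hab
  refine ⟨S.convex_Δ hx.1 hy.1 ha hb hab, fun m' hm' => ?_⟩
  rw [pair_add_left, pair_smul_left, pair_smul_left]
  have e1 : a * pair x w ≤ a * pair m' w := mul_le_mul_of_nonneg_left (hx.2 m' hm') ha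
  have e2 : b * pair y w ≤ b * pair m' w := mul_le_mul_of_nonneg_left (hy.2 m' hm') hb
  have e3 : a * pair m' w + b * pair m' w = pair m' w := by rw [← add_mul, hab]; ring
  linarith

lemma hk_convex {a b : ℝ} (ha : 0 ≤ a) (hb : 0 ≤ b) (hab : a + b = 1) (x y : V n) :
    S.hk (a • x + b • y) ≤ a * S.hk x + b * S.hk y := by
  rw [S.hpl]
  apply Finset.sup'_le
  intro f hf
  rw [pair_add_left, pair_smul_left, pair_smul_left]
  have h1 : -(pair x f) ≤ S.hk x := by
    rw [S.hpl]; exact Finset.le_sup' (fun f => -(pair x f)) hf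
  have h2 : -(pair y f) ≤ S.hk y := by
    rw [S.hpl]; exact Finset.le_sup' (fun f => -(pair y f)) hf
  have e1 : a * (-(pair x f)) ≤ a * S.hk x := mul_le_mul_of_nonneg_left h1 ha
  have e2 : b * (-(pair y f)) ≤ b * S.hk y := mul_le_mul_of_nonneg_left h2 hb
  nlinarith

lemma G_convex (u : V n) : Convex ℝ (S.G u) := by
  intro x hx y hy a b ha hb hab
  refine ⟨S.convex_Δ hx.1 hy.1 ha hb hab, fun m' hm' => ?_⟩
  have hkc := S.hk_convex ha hb hab x y
  rw [pair_add_left, pair_smul_left, pair_smul_left]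
  have e1 : a * (pair x u + S.hk x) ≤ a * (pair m' u + S.hk m') :=
    mul_le_mul_of_nonneg_left (hx.2 m' hm') ha
  have e2 : b * (pair y u + S.hk y) ≤ b * (pair m' u + S.hk m') :=
    mul_le_mul_of_nonneg_left (hy.2 m' hm') hb
  have e3 : a * (pair m' u + S.hk m') + b * (pair m' u + S.hk m') = pair m' u + S.hk m' := by
    rw [← add_mul, hab]; ring
  linarith

/-- On `G u`, the function `⟨·,u⟩ + hk` is constant. -/
lemma G_const {u : V n} {x y : V n} (hx : x ∈ S.G u) (hy : y ∈ S.G u) :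
    pair x u + S.hk x = pair y u + S.hk y :=
  le_antisymm (hx.2 y hy.1) (hy.2 x hx.1)

/-- Key duality: `T ⊆ SΔ w` iff `w` lies in the cone over the dual face `D T` (or is `0`). -/
lemma mem_cone_D_iff {T : Set (V n)} (hTne : T.Nonempty) (hT : T ⊆ S.Δ) (w : V n) :
    T ⊆ S.SΔ w ↔ w = 0 ∨ w ∈ cone0 (S.D T) := by
  constructor
  · intro hsub
    by_cases hw : w = 0
    · exact Or.inl hw
    right
    obtain ⟨m₁, hm₁⟩ := hTne
    have hm₁' := hsub hm₁
    set c : ℝ := pair m₁ w with hc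
    have hcneg : c < 0 := by
      obtain ⟨m, hmΔ, hm⟩ := S.min_neg hw
      exact lt_of_le_of_lt (hm₁'.2 m hmΔ) hm
    have hcpos : 0 < -c := by linarith
    refine ⟨-c, by linarith, (1/(-c)) • w, ⟨?_, ?_⟩, ?_⟩
    · intro m hmΔ
      rw [pair_smul_right]
      have h1 : c ≤ pair m w := hm₁'.2 m hmΔ
      have h2 : (1/(-c)) * c ≤ (1/(-c)) * pair m w :=
        mul_le_mul_of_nonneg_left h1 (by positivity)
      have h3 : (1/(-c)) * c = -1 := by field_simp; rw [div_self (ne_of_lt hcneg)]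
      linarith
    · intro m hm
      rw [pair_smul_right]
      have hmin : pair m w = c := by
        have hle : pair m w ≤ c := (hsub hm).2 m₁ (hT hm₁)
        have hge : c ≤ pair m w := hm₁'.2 m (hT hm)
        linarith
      rw [hmin]
      field_simp; rw [div_self (ne_of_lt hcneg)]
    · rw [smul_smul]
      have : -c * (1/(-c)) = 1 := by field_simp; exact div_self (ne_of_lt hcneg)
      rw [this, one_smul]
  · rintro (rfl | ⟨c', hc', d, hd, rfl⟩)
    · intro m hm
      refine ⟨hT hm, fun m' _ => ?_⟩
      rw [pair_zero_right, pair_zero_right]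
    · intro m hm
      refine ⟨hT hm, fun m' hm' => ?_⟩
      rw [pair_smul_right, pair_smul_right]
      have h1 : pair m (d : V n) = -1 := hd.2 m hm
      have h2 : -1 ≤ pair m' d := hd.1 m' hm'
      have := mul_le_mul_of_nonneg_left h2 hc'
      rw [h1]
      linarith

/-- If `D T` is nonempty and `m₀` is a relative interior point of `T ⊆ Δ`, then
`D T` is the argmin face of `⟨m₀,·⟩` on `polar Δ`, with minimum value `-1`. -/
lemma D_eq_SP {T : Set (V n)} (hT : T ⊆ S.Δ) {m₀ : V n}
    (hm₀ : m₀ ∈ intrinsicInterior ℝ T) (hDne : (S.D T).Nonempty) :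
    S.D T = S.SP m₀ := by
  have hm₀T : m₀ ∈ T := intrinsicInterior_subset hm₀
  obtain ⟨w₁, hw₁⟩ := hDne
  have hmin : ∀ w ∈ polar S.Δ, -1 ≤ pair m₀ w := fun w hw => hw m₀ (hT hm₀T)
  have hval : pair m₀ w₁ = -1 := hw₁.2 m₀ hm₀T
  apply Set.Subset.antisymm
  · intro w hw
    refine ⟨hw.1, fun w' hw' => ?_⟩
    rw [hw.2 m₀ hm₀T]
    exact hmin w' hw'
  · intro w hw
    have hweq : pair m₀ w = -1 := by
      have h1 := hw.2 w₁ hw₁.1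
      rw [hval] at h1
      exact le_antisymm h1 (hmin w hw.1)
    refine ⟨hw.1, fun m hm => ?_⟩
    exact relint_min hm₀ w (-1) (fun z hz => hw.1 z (hT hz)) hweq m hm

/-- value of the minimum of `⟨m₀,·⟩` on `Q` is `-hk m₀`. -/
lemma SQ_min_val {m₀ : V n} {q : V n} (hq : q ∈ S.SQ m₀) : pair m₀ q = -(S.hk m₀) := by
  obtain ⟨q', hq', hval⟩ := S.exists_attainQ m₀
  have h1 := hq.2 q' hq'
  rw [hval] at h1
  exact le_antisymm h1 (S.pairQ hq.1 m₀)

/-- If `m₀` is a relative interior point of `G u`, then `TQ (G u)` is the argmin face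
of `⟨m₀,·⟩` on `Q`. -/
lemma TQ_eq_SQ {u : V n} {m₀ : V n} (hm₀ : m₀ ∈ intrinsicInterior ℝ (S.G u)) :
    S.TQ (S.G u) = S.SQ m₀ := by
  have hm₀G : m₀ ∈ S.G u := intrinsicInterior_subset hm₀
  set c : ℝ := pair m₀ u + S.hk m₀ with hc
  apply Set.Subset.antisymm
  · intro q hq
    refine ⟨hq.1, fun q' hq' => ?_⟩
    rw [hq.2 m₀ hm₀G]
    exact S.pairQ hq' m₀
  · intro q hq
    have hqval : pair m₀ q = -(S.hk m₀) := S.SQ_min_val hq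
    refine ⟨hq.1, fun m hm => ?_⟩
    -- On `G u`, `pair · (q - u) ≥ -c` with equality at `m₀`.
    have hlb : ∀ z ∈ S.G u, -c ≤ pair z (q - u) := by
      intro z hz
      rw [pair_sub_right]
      have h1 : -(S.hk z) ≤ pair z q := S.pairQ hq.1 z
      have h2 : pair z u + S.hk z = c := S.G_const hz hm₀G
      linarith
    have heq : pair m₀ (q - u) = -c := by
      rw [pair_sub_right, hqval, hc]
      ring
    have := relint_min hm₀ (q - u) (-c) hlb heq m hm
    rw [pair_sub_right] at this
    have h2 : pair m u + S.hk m = c := S.G_const hm hm₀G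
    linarith

lemma isExposed_SP (m₀ : V n) : IsExposed ℝ (polar S.Δ) (S.SP m₀) := by
  intro _
  refine ⟨-(pairCLM m₀), ?_⟩
  ext w
  simp only [SP, Set.mem_setOf_eq, ContinuousLinearMap.neg_apply, pairCLM_apply, neg_le_neg_iff]

lemma isExposed_SQ (m₀ : V n) : IsExposed ℝ S.Q (S.SQ m₀) := by
  intro _
  refine ⟨-(pairCLM m₀), ?_⟩
  ext w
  simp only [SQ, Set.mem_setOf_eq, ContinuousLinearMap.neg_apply, pairCLM_apply, neg_le_neg_iff]

lemma SP_add_SQ (m₀ : V n) :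
    S.SP m₀ + S.SQ m₀ =
      {x ∈ polar S.Δ + S.Q | ∀ y ∈ polar S.Δ + S.Q, pair m₀ x ≤ pair m₀ y} := by
  apply Set.Subset.antisymm
  · rintro x ⟨a, ha, b, hb, rfl⟩
    refine ⟨Set.add_mem_add ha.1 hb.1, ?_⟩
    rintro y ⟨a', ha', b', hb', rfl⟩
    rw [pair_add_right, pair_add_right]
    exact add_le_add (ha.2 a' ha') (hb.2 b' hb')
  · rintro x ⟨⟨a, ha, b, hb, rfl⟩, hmin⟩
    have haP : a ∈ S.SP m₀ := by
      refine ⟨ha, fun a' ha' => ?_⟩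
      have := hmin (a' + b) (Set.add_mem_add ha' hb)
      rw [pair_add_right, pair_add_right] at this
      linarith
    have hbQ : b ∈ S.SQ m₀ := by
      refine ⟨hb, fun b' hb' => ?_⟩
      have := hmin (a + b') (Set.add_mem_add ha hb')
      rw [pair_add_right, pair_add_right] at this
      linarith
    exact Set.add_mem_add haP hbQ

lemma isExposed_SP_add_SQ (m₀ : V n) :
    IsExposed ℝ (polar S.Δ + S.Q) (S.SP m₀ + S.SQ m₀) := by
  intro _
  refine ⟨-(pairCLM m₀), ?_⟩
  rw [S.SP_add_SQ m₀]
  ext w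
  simp only [Set.mem_setOf_eq, ContinuousLinearMap.neg_apply, pairCLM_apply, neg_le_neg_iff]

/-- Uniqueness of decompositions of a face of a Minkowski sum. -/
lemma sum_faces_unique {A B C D' : Set (V n)} (hAne : A.Nonempty) (hBne : B.Nonempty)
    (hA : IsClosed A) (hAco : Convex ℝ A) (hB : IsClosed B) (hBco : Convex ℝ B)
    (hCcpt : IsCompact C) (hDcpt : IsCompact D')
    (hAC : A ⊆ C) (hBD : B ⊆ D') (hsum : A + B = C + D') : A = C ∧ B = D' := by
  have hBcpt : IsCompact B := hDcpt.of_isClosed_subset hB hBD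
  have hAcpt : IsCompact A := hCcpt.of_isClosed_subset hA hAC
  constructor
  · refine Set.Subset.antisymm hAC fun c hc => ?_
    by_contra hca
    obtain ⟨ℓ, u, hcu, hgt⟩ := geometric_hahn_banach_point_closed hAco hA hca
    obtain ⟨m₁, hm₁⟩ := exists_rep ℓ
    obtain ⟨b₀, hb₀, hbmin⟩ := exists_minOn hBcpt hBne (continuous_pair_left m₁)
    have hmem : c + b₀ ∈ A + B := by
      rw [hsum]; exact Set.add_mem_add hc (hBD hb₀)
    obtain ⟨a, haA, b, hbB, habeq⟩ := hmem
    have h1 : u < pair m₁ a := by rw [← hm₁]; exact hgt a haA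
    have h2 : pair m₁ c < u := by rw [← hm₁]; exact hcu
    have h3 : pair m₁ b₀ ≤ pair m₁ b := hbmin b hbB
    have h4 : pair m₁ (c + b₀) = pair m₁ (a + b) := by
      rw [show a + b = c + b₀ from habeq]
    rw [pair_add_right, pair_add_right] at h4
    linarith
  · refine Set.Subset.antisymm hBD fun d hd => ?_
    by_contra hdb
    obtain ⟨ℓ, u, hdu, hgt⟩ := geometric_hahn_banach_point_closed hBco hB hdb
    obtain ⟨m₁, hm₁⟩ := exists_rep ℓ
    obtain ⟨a₀, ha₀, hamin⟩ := exists_minOn hAcpt hAne (continuous_pair_left m₁)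
    have hmem : a₀ + d ∈ A + B := by
      rw [hsum]; exact Set.add_mem_add (hAC ha₀) hd
    obtain ⟨a, haA, b, hbB, habeq⟩ := hmem
    have h1 : u < pair m₁ b := by rw [← hm₁]; exact hgt b hbB
    have h2 : pair m₁ d < u := by rw [← hm₁]; exact hdu
    have h3 : pair m₁ a₀ ≤ pair m₁ a := hamin a haA
    have h4 : pair m₁ (a₀ + d) = pair m₁ (a + b) := by
      rw [show a + b = a₀ + d from habeq]
    rw [pair_add_right, pair_add_right] at h4
    linarith

end Setup


lemma pair_neg_left {n : ℕ} (a b : V n) : pair (-a) b = -(pair a b) := by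
  simp [pair, Finset.sum_neg_distrib]

lemma pairP_neg {n : ℕ} (z p : V n × ℝ) : pairP (-z) p = -(pairP z p) := by
  simp only [pairP, Prod.fst_neg, Prod.snd_neg, pair_neg_left, neg_mul]
  ring

lemma ball_sub_of_interior {n : ℕ} {A : Set (V n)} (h : (0 : V n) ∈ interior A) :
    ∃ ε : ℝ, 0 < ε ∧ ∀ x : V n, ‖x‖ < ε → x ∈ A := by
  obtain ⟨ε, hε, hball⟩ := Metric.mem_nhds_iff.mp (mem_interior_iff_mem_nhds.mp h)
  exact ⟨ε, hε, fun x hx => hball (by simpa [Metric.mem_ball, dist_zero_right] using hx)⟩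

/-- Membership criterion for a Minkowski sum of compact convex sets. -/
lemma mem_add_of_pair_le {n : ℕ} {A B : Set (V n)}
    (hA : IsCompact A) (hAco : Convex ℝ A) (hB : IsCompact B) (hBco : Convex ℝ B)
    {x : V n} (h : ∀ m : V n, ∃ a ∈ A, ∃ b ∈ B, pair m a + pair m b ≤ pair m x) :
    x ∈ A + B := by
  by_contra hx
  have hclosed : IsClosed (A + B) := (hA.add hB).isClosed
  have hconv : Convex ℝ (A + B) := hAco.add hBco
  obtain ⟨ℓ, u, hxu, hgt⟩ := geometric_hahn_banach_point_closed hconv hclosed hx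
  obtain ⟨m₁, hm₁⟩ := exists_rep ℓ
  obtain ⟨a, ha, b, hb, hle⟩ := h m₁
  have h1 : u < pair m₁ (a + b) := by
    rw [← hm₁]; exact hgt _ (Set.add_mem_add ha hb)
  have h2 : pair m₁ x < u := by rw [← hm₁]; exact hxu
  rw [pair_add_right] at h1
  linarith

namespace Setup

variable {n : ℕ} (S : Setup n)

/-- `Δt` as determined by the setup. -/
def Dt : Set (V n × ℝ) := {p | p.1 ∈ S.Δ ∧ S.hk p.1 ≤ p.2}

/-- the face of `Dt` exposed by `(v,0)` (in minimizing form). -/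
def Fv (v : V n) : Set (V n × ℝ) := {p ∈ S.Dt | p.1 ∈ S.SΔ v}

/-- the face of `Dt` exposed by `(u,1)` (in minimizing form). -/
def Fu (u : V n) : Set (V n × ℝ) := {p | p.1 ∈ S.G u ∧ p.2 = S.hk p.1}

lemma graph_mem_Dt {m : V n} (hm : m ∈ S.Δ) : ((m, S.hk m) : V n × ℝ) ∈ S.Dt :=
  ⟨hm, le_refl _⟩

lemma argminP_v (v : V n) :
    {x ∈ S.Dt | ∀ p ∈ S.Dt, pairP (v, 0) x ≤ pairP (v, 0) p} = S.Fv v := by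
  ext x
  simp only [Set.mem_setOf_eq, pairP, zero_mul, add_zero, Fv, SΔ, Set.mem_sep_iff]
  constructor
  · rintro ⟨hx, hmin⟩
    refine ⟨hx, hx.1, fun m' hm' => ?_⟩
    have h1 := hmin (m', S.hk m') ⟨hm', le_refl _⟩
    rw [pair_comm x.1 v, pair_comm m' v]
    exact h1
  · rintro ⟨hx, _, hmin⟩
    refine ⟨hx, fun p hp => ?_⟩
    rw [pair_comm v x.1, pair_comm v p.1]
    exact hmin p.1 hp.1

lemma argminP_u (u : V n) :
    {x ∈ S.Dt | ∀ p ∈ S.Dt, pairP (u, 1) x ≤ pairP (u, 1) p} = S.Fu u := by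
  ext x
  simp only [Set.mem_setOf_eq, pairP, one_mul, Fu, G, Set.mem_sep_iff]
  constructor
  · rintro ⟨hx, hmin⟩
    have hx2 : x.2 = S.hk x.1 := by
      have h1 := hmin (x.1, S.hk x.1) ⟨hx.1, le_refl _⟩
      simp only at h1
      have h2 := hx.2
      linarith
    refine ⟨⟨hx.1, fun m' hm' => ?_⟩, hx2⟩
    have h1 := hmin (m', S.hk m') ⟨hm', le_refl _⟩
    simp only at h1
    rw [pair_comm x.1 u, pair_comm m' u]
    linarith [hx2 ▸ h1]
  · rintro ⟨hx, hx2⟩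
    refine ⟨⟨hx.1, hx2 ▸ le_refl _⟩, fun p hp => ?_⟩
    have h1 : pair x.1 u + S.hk x.1 ≤ pair p.1 u + S.hk p.1 := hx.2 p.1 hp.1
    have h2 : S.hk p.1 ≤ p.2 := hp.2
    rw [pair_comm u x.1, pair_comm u p.1]
    linarith [hx2 ▸ h1]

lemma isExposed_argminP (z : V n × ℝ) :
    IsExposed ℝ S.Dt {x ∈ S.Dt | ∀ p ∈ S.Dt, pairP z x ≤ pairP z p} := by
  intro _
  refine ⟨pairPCLM (-z), ?_⟩
  ext x
  simp only [Set.mem_sep_iff, Set.mem_setOf_eq, pairPCLM_apply, pairP_neg, neg_le_neg_iff]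

lemma isExposed_Fv (v : V n) : IsExposed ℝ S.Dt (S.Fv v) := by
  rw [← S.argminP_v v]
  exact S.isExposed_argminP (v, 0)

lemma isExposed_Fu (u : V n) : IsExposed ℝ S.Dt (S.Fu u) := by
  rw [← S.argminP_u u]
  exact S.isExposed_argminP (u, 1)

lemma Fv_nonempty (v : V n) : (S.Fv v).Nonempty := by
  obtain ⟨m, hm⟩ := S.SΔ_nonempty v
  exact ⟨(m, S.hk m), S.graph_mem_Dt hm.1, hm⟩

lemma Fu_nonempty (u : V n) : (S.Fu u).Nonempty := by
  obtain ⟨m, hm⟩ := S.G_nonempty u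
  exact ⟨(m, S.hk m), hm, rfl⟩

lemma Fv_ne {v : V n} (hv : v ≠ 0) : S.Fv v ≠ S.Dt := by
  intro h
  have h0 : ((0 : V n), (0:ℝ)) ∈ S.Dt := ⟨S.zero_mem_Δ, by rw [S.hk_zero]⟩
  rw [← h] at h0
  obtain ⟨m, hmΔ, hm⟩ := S.min_neg hv
  have := h0.2.2 m hmΔ
  rw [pair_zero_left] at this
  linarith

lemma Fu_ne (u : V n) : S.Fu u ≠ S.Dt := by
  intro h
  have h0 : ((0 : V n), (1:ℝ)) ∈ S.Dt := ⟨S.zero_mem_Δ, by rw [S.hk_zero]; norm_num⟩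
  rw [← h] at h0
  have := h0.2
  simp only at this
  rw [S.hk_zero] at this
  norm_num at this

lemma D_SΔ_nonempty {v : V n} (hv : v ≠ 0) : (S.D (S.SΔ v)).Nonempty := by
  have h := (S.mem_cone_D_iff (S.SΔ_nonempty v) (S.SΔ_subset v) v).mp (subset_refl _)
  rcases h with h | ⟨c, _, d, hd, _⟩
  · exact absurd h hv
  · exact ⟨d, hd⟩

lemma TQ_G_nonempty (u : V n) : (S.TQ (S.G u)).Nonempty := by
  obtain ⟨m₀, hm₀⟩ := Set.Nonempty.intrinsicInterior (S.G_convex u) (S.G_nonempty u)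
  rw [S.TQ_eq_SQ hm₀]
  exact S.SQ_nonempty m₀

/-- The key Minkowski decomposition: if `G u ⊆ G w'` then `w'` decomposes as a
cone-over-dual-face element plus an element of `TQ (G u)`. -/
lemma G_sub_G_decomp {u w' : V n} (h : S.G u ⊆ S.G w') :
    ∃ x, (x = 0 ∨ x ∈ cone0 (S.D (S.G u))) ∧ ∃ q ∈ S.TQ (S.G u), w' = x + q := by
  obtain ⟨m₁, hm₁⟩ := S.G_nonempty u
  set c' : ℝ := pair m₁ w' + S.hk m₁ with hc'
  have hm₁' : m₁ ∈ S.G w' := h hm₁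
  have hc'le : c' ≤ 0 := by
    have := hm₁'.2 0 S.zero_mem_Δ
    rw [pair_zero_left, S.hk_zero] at this
    linarith
  have hc'nonneg : 0 ≤ -c' := by linarith
  -- membership of `w'` in `(-c') • polar Δ + Q`
  have hmemb : w' ∈ (-c') • polar S.Δ + S.Q := by
    apply mem_add_of_pair_le (S.compact_P.smul (-c')) (S.convex_P.smul (-c'))
      S.compact_Q S.convex_Q
    intro m
    obtain ⟨b, hbQ, hbval⟩ := S.exists_attainQ m
    by_cases hm : m = 0
    · refine ⟨(-c') • 0, Set.smul_mem_smul_set S.zero_mem_P, b, hbQ, ?_⟩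
      subst hm
      simp [pair_zero_left]
    · -- λ := -(min of pair m over polar) > 0
      obtain ⟨wm, hwm⟩ := S.SP_nonempty m
      set lam : ℝ := -(pair m wm) with hlam
      have hlam0 : 0 ≤ lam := by
        have := hwm.2 0 S.zero_mem_P
        rw [pair_zero_right] at this
        simp only [hlam]
        linarith
      have hlampos : 0 < lam := by
        rcases lt_or_eq_of_le hlam0 with h1 | h1
        · exact h1
        exfalso
        obtain ⟨ε, hε, hball⟩ := ball_sub_of_interior S.zero_int_P
        have hmm : 0 < pair m m := pair_self_pos hm
        have hnm : 0 < ‖m‖ := norm_pos_iff.mpr hm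
        set δ : ℝ := ε / (2 * ‖m‖) with hδ
        have hδ0 : 0 < δ := by positivity
        have hmem : (-δ) • m ∈ polar S.Δ := by
          apply hball
          rw [norm_smul]
          simp only [norm_neg, Real.norm_eq_abs, abs_of_pos hδ0]
          rw [hδ]
          have he : ε / (2 * ‖m‖) * ‖m‖ = ε / 2 := by field_simp
          rw [he]; linarith
        have h3 := hwm.2 _ hmem
        rw [pair_smul_right] at h3
        have h4 : pair m wm = 0 := by rw [hlam] at h1; linarith
        nlinarith
      -- m / lam ∈ Δ by the bipolar theorem
      have hmem2 : (1/lam) • m ∈ S.Δ := by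
        rw [← S.bipolar]
        intro w hw
        rw [pair_smul_left]
        have h1 : -lam ≤ pair m w := by
          have := hwm.2 w hw
          simp only [hlam] at *
          linarith
        have h2 : (1/lam) * (-lam) ≤ (1/lam) * pair m w :=
          mul_le_mul_of_nonneg_left h1 (by positivity)
        have h3 : (1/lam) * (-lam) = -1 := by field_simp
        linarith
      -- g(m) ≥ c' * lam
      have hgm : c' * lam ≤ pair m w' + S.hk m := by
        have h1 := hm₁'.2 _ hmem2
        rw [pair_smul_left, S.hk_smul (by positivity : (0:ℝ) ≤ 1/lam)] at h1
        rw [← hc'] at h1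
        have h2 : c' * lam ≤ ((1/lam) * pair m w' + (1/lam) * S.hk m) * lam := by
          apply mul_le_mul_of_nonneg_right h1 (le_of_lt hlampos)
        calc c' * lam ≤ ((1/lam) * pair m w' + (1/lam) * S.hk m) * lam := h2
          _ = pair m w' + S.hk m := by field_simp
      refine ⟨(-c') • wm, Set.smul_mem_smul_set hwm.1, b, hbQ, ?_⟩
      rw [pair_smul_right, hbval]
      have : -c' * pair m wm = c' * lam := by
        simp only [hlam]; ring
      rw [this]
      linarith
  -- decompose and check tightness
  obtain ⟨a, ha, b, hb, habeq⟩ := hmemb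
  obtain ⟨d, hd, hdeq⟩ := ha
  have habeq' : a + b = w' := habeq
  -- tightness at every m ∈ G u
  have htight : ∀ m ∈ S.G u, pair m b = -(S.hk m) ∧ pair m a = c' := by
    intro m hm
    have hmw' : pair m w' + S.hk m = c' := S.G_const (h hm) hm₁'
    have h1 : c' ≤ pair m a := by
      rw [← hdeq, pair_smul_right]
      have h2 : -1 ≤ pair m d := hd m (S.G_subset u hm)
      have := mul_le_mul_of_nonneg_left h2 hc'nonneg
      linarith
    have h2 : -(S.hk m) ≤ pair m b := S.pairQ hb m
    have h3 : pair m a + pair m b = pair m w' := by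
      rw [← pair_add_right, habeq']
    constructor <;> linarith
  have hbTQ : b ∈ S.TQ (S.G u) := ⟨hb, fun m hm => (htight m hm).1⟩
  refine ⟨a, ?_, b, hbTQ, by rw [← habeq']⟩
  by_cases hc0 : c' = 0
  · left
    rw [← hdeq, hc0]
    simp
  · right
    have hc'neg : c' < 0 := lt_of_le_of_ne hc'le hc0
    refine ⟨-c', by linarith, d, ⟨hd, fun m hm => ?_⟩, hdeq.symm⟩
    have h1 := (htight m hm).2
    rw [← hdeq, pair_smul_right] at h1
    have h2 : c' * pair m d = c' * (-1) := by linarith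
    exact mul_left_cancel₀ hc0 h2

end Setup


lemma cone0_smul_mem {E : Type*} [AddCommMonoid E] [Module ℝ E] {S : Set E}
    {x : E} (hx : x ∈ cone0 S) {c : ℝ} (hc : 0 ≤ c) : c • x ∈ cone0 S := by
  obtain ⟨c₀, hc₀, s, hs, rfl⟩ := hx
  exact ⟨c * c₀, mul_nonneg hc hc₀, s, hs, smul_smul c c₀ s⟩

namespace Setup

variable {n : ℕ} (S : Setup n)

lemma NC_Fv {v : V n} (hv : v ≠ 0) :
    normalConeP S.Dt (S.Fv v) = cone0 (S.D (S.SΔ v) ×ˢ ({0} : Set ℝ)) := by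
  ext y
  constructor
  · intro hy
    obtain ⟨m₁, hm₁⟩ := S.SΔ_nonempty v
    have hD1 : ((m₁, S.hk m₁) : V n × ℝ) ∈ S.Dt := S.graph_mem_Dt hm₁.1
    have hD2 : ((m₁, S.hk m₁ + 1) : V n × ℝ) ∈ S.Dt :=
      ⟨hm₁.1, by show S.hk m₁ ≤ S.hk m₁ + 1; linarith⟩
    have hf₀ : ((m₁, S.hk m₁) : V n × ℝ) ∈ S.Fv v := ⟨hD1, hm₁⟩
    have hf₁ : ((m₁, S.hk m₁ + 1) : V n × ℝ) ∈ S.Fv v := ⟨hD2, hm₁⟩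
    have hs1 := hy _ hf₁ _ hD1
    have hs2 := hy _ hf₀ _ hD2
    simp only [pairP] at hs1 hs2
    have hs : y.2 = 0 := by nlinarith
    have hsub : S.SΔ v ⊆ S.SΔ y.1 := by
      intro m hm
      refine ⟨hm.1, fun m' hm' => ?_⟩
      have := hy (m, S.hk m) ⟨S.graph_mem_Dt hm.1, hm⟩ (m', S.hk m') (S.graph_mem_Dt hm')
      simp only [pairP, hs, zero_mul, add_zero] at this
      rw [pair_comm m y.1, pair_comm m' y.1]
      exact this
    rw [mem_cone0_prod_zero]
    rcases (S.mem_cone_D_iff (S.SΔ_nonempty v) (S.SΔ_subset v) y.1).mp hsub with h0 | hc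
    · exact ⟨h0 ▸ zero_mem_cone0 (S.D_SΔ_nonempty hv), hs⟩
    · exact ⟨hc, hs⟩
  · intro hy
    rw [mem_cone0_prod_zero] at hy
    obtain ⟨hw, hs⟩ := hy
    have hsub : S.SΔ v ⊆ S.SΔ y.1 :=
      (S.mem_cone_D_iff (S.SΔ_nonempty v) (S.SΔ_subset v) y.1).mpr (Or.inr hw)
    intro f hf p hp
    have h1 : pair f.1 y.1 ≤ pair p.1 y.1 := (hsub hf.2).2 p.1 hp.1
    simp only [pairP, hs, zero_mul, add_zero]
    rw [pair_comm y.1 f.1, pair_comm y.1 p.1]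
    exact h1

lemma NC_Fu_core (u : V n) :
    normalConeP S.Dt (S.Fu u) =
      {y : V n × ℝ | (y.2 = 0 ∧ (y.1 = 0 ∨ y.1 ∈ cone0 (S.D (S.G u)))) ∨
        (0 < y.2 ∧ ∃ x, (x = 0 ∨ x ∈ cone0 (S.D (S.G u))) ∧
          ∃ q ∈ S.TQ (S.G u), y.1 = x + y.2 • q)} := by
  ext y
  constructor
  · intro hy
    obtain ⟨m₁, hm₁⟩ := S.G_nonempty u
    have hf₀ : ((m₁, S.hk m₁) : V n × ℝ) ∈ S.Fu u := ⟨hm₁, rfl⟩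
    have hD2 : ((m₁, S.hk m₁ + 1) : V n × ℝ) ∈ S.Dt :=
      ⟨hm₁.1, by show S.hk m₁ ≤ S.hk m₁ + 1; linarith⟩
    have hsnn : 0 ≤ y.2 := by
      have := hy _ hf₀ _ hD2
      simp only [pairP] at this
      nlinarith
    have hGmin : ∀ m ∈ S.G u, ∀ m' ∈ S.Δ,
        pair y.1 m + y.2 * S.hk m ≤ pair y.1 m' + y.2 * S.hk m' := by
      intro m hm m' hm'
      have := hy (m, S.hk m) ⟨hm, rfl⟩ (m', S.hk m') (S.graph_mem_Dt hm')
      simpa only [pairP] using this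
    rcases eq_or_lt_of_le hsnn with hs0 | hspos
    · left
      refine ⟨hs0.symm, ?_⟩
      have hsub : S.G u ⊆ S.SΔ y.1 := by
        intro m hm
        refine ⟨S.G_subset u hm, fun m' hm' => ?_⟩
        have := hGmin m hm m' hm'
        rw [← hs0] at this
        simp only [zero_mul, add_zero] at this
        rw [pair_comm m y.1, pair_comm m' y.1]
        linarith
      exact (S.mem_cone_D_iff (S.G_nonempty u) (S.G_subset u) y.1).mp hsub
    · right
      refine ⟨hspos, ?_⟩
      set w' : V n := (1 / y.2) • y.1 with hw'
      have key : ∀ z : V n, (1 / y.2) * (pair y.1 z + y.2 * S.hk z) = pair z w' + S.hk z := by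
        intro z
        rw [hw', pair_smul_right, pair_comm y.1 z]
        field_simp
      have hGG : S.G u ⊆ S.G w' := by
        intro m hm
        refine ⟨S.G_subset u hm, fun m' hm' => ?_⟩
        have h1 := hGmin m hm m' hm'
        have h2 := mul_le_mul_of_nonneg_left h1 (le_of_lt (by positivity : (0:ℝ) < 1 / y.2))
        rw [key m, key m'] at h2
        exact h2
      obtain ⟨x, hx, q, hq, hw'eq⟩ := S.G_sub_G_decomp hGG
      refine ⟨y.2 • x, ?_, q, hq, ?_⟩
      · rcases hx with rfl | hx
        · left; exact smul_zero _
        · right; exact cone0_smul_mem hx (le_of_lt hspos)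
      · have h1 : y.2 • w' = y.1 := by
          rw [hw', smul_smul]
          have : y.2 * (1 / y.2) = 1 := by field_simp
          rw [this, one_smul]
        rw [← h1, hw'eq, smul_add]
  · intro hy
    rcases hy with ⟨hs0, hx⟩ | ⟨hspos, x, hx, q, hq, hyeq⟩
    · intro f hf p hp
      simp only [pairP, hs0, zero_mul, add_zero]
      rcases hx with h0 | hx
      · rw [h0, pair_zero_left, pair_zero_left]
      · have hsub : S.G u ⊆ S.SΔ y.1 :=
          (S.mem_cone_D_iff (S.G_nonempty u) (S.G_subset u) y.1).mpr (Or.inr hx)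
        have h1 : pair f.1 y.1 ≤ pair p.1 y.1 := (hsub hf.1).2 p.1 hp.1
        rw [pair_comm y.1 f.1, pair_comm y.1 p.1]
        exact h1
    · intro f hf p hp
      have hxle : pair x f.1 ≤ pair x p.1 := by
        rcases hx with rfl | hx
        · rw [pair_zero_left, pair_zero_left]
        · have hsub : S.G u ⊆ S.SΔ x :=
            (S.mem_cone_D_iff (S.G_nonempty u) (S.G_subset u) x).mpr (Or.inr hx)
          have h1 : pair f.1 x ≤ pair p.1 x := (hsub hf.1).2 p.1 hp.1
          rw [pair_comm x f.1, pair_comm x p.1]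
          exact h1
      have hqf : pair q f.1 = -(S.hk f.1) := by
        rw [pair_comm]
        exact hq.2 f.1 hf.1
      have hqp : -(S.hk p.1) ≤ pair q p.1 := by
        rw [pair_comm]
        exact S.pairQ hq.1 p.1
      have e1 : pairP y f = pair x f.1 := by
        simp only [pairP, hyeq, pair_add_left, pair_smul_left, hqf, hf.2]
        ring
      have e2 : pair x p.1 ≤ pairP y p := by
        simp only [pairP, hyeq, pair_add_left, pair_smul_left]
        have h3 : y.2 * (-(S.hk p.1)) ≤ y.2 * pair q p.1 :=
          mul_le_mul_of_nonneg_left hqp (le_of_lt hspos)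
        have h4 : y.2 * S.hk p.1 ≤ y.2 * p.2 :=
          mul_le_mul_of_nonneg_left hp.2 (le_of_lt hspos)
        linarith
      rw [e1]
      exact le_trans hxle e2

lemma NC_Fu_empty {u : V n} (hD : S.D (S.G u) = ∅) :
    normalConeP S.Dt (S.Fu u) = cone0 (S.TQ (S.G u) ×ˢ ({1} : Set ℝ)) := by
  rw [S.NC_Fu_core u]
  ext y
  rw [mem_cone0_prod_one]
  simp only [Set.mem_setOf_eq, hD, cone0, Set.mem_empty_iff_false]
  constructor
  · rintro (⟨hs0, h0 | ⟨c, hc, s, hs, _⟩⟩ | ⟨hspos, x, hx, q, hq, hyeq⟩)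
    · refine ⟨le_of_eq hs0.symm, ?_⟩
      obtain ⟨q, hq⟩ := S.TQ_G_nonempty u
      exact ⟨q, hq, by rw [h0, hs0, zero_smul]⟩
    · exact absurd hs (by simp)
    · rcases hx with rfl | ⟨c, hc, s, hs, _⟩
      · exact ⟨le_of_lt hspos, q, hq, by rw [hyeq, zero_add]⟩
      · exact absurd hs (by simp)
  · rintro ⟨hs, q, hq, hyeq⟩
    rcases eq_or_lt_of_le hs with hs0 | hspos
    · left
      exact ⟨hs0.symm, Or.inl (by rw [hyeq, ← hs0, zero_smul])⟩
    · right
      exact ⟨hspos, 0, Or.inl rfl, q, hq, by rw [hyeq, zero_add]⟩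

lemma NC_Fu_nonempty {u : V n} (hD : (S.D (S.G u)).Nonempty) :
    normalConeP S.Dt (S.Fu u) =
      cone0 (S.D (S.G u) ×ˢ ({0} : Set ℝ)) + cone0 (S.TQ (S.G u) ×ˢ ({1} : Set ℝ)) := by
  rw [S.NC_Fu_core u]
  ext y
  constructor
  · rintro (⟨hs0, hx⟩ | ⟨hspos, x, hx, q, hq, hyeq⟩)
    · obtain ⟨q, hq⟩ := S.TQ_G_nonempty u
      refine ⟨(y.1, 0), ?_, (0, 0), ?_, ?_⟩
      · rw [mem_cone0_prod_zero]
        rcases hx with h0 | hx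
        · exact ⟨h0 ▸ zero_mem_cone0 hD, rfl⟩
        · exact ⟨hx, rfl⟩
      · rw [mem_cone0_prod_one]
        exact ⟨le_refl _, q, hq, by rw [zero_smul]⟩
      · ext
        · simp
        · simp [hs0]
    · refine ⟨(x, 0), ?_, (y.2 • q, y.2), ?_, ?_⟩
      · rw [mem_cone0_prod_zero]
        rcases hx with rfl | hx
        · exact ⟨zero_mem_cone0 hD, rfl⟩
        · exact ⟨hx, rfl⟩
      · rw [mem_cone0_prod_one]
        exact ⟨le_of_lt hspos, q, hq, rfl⟩
      · ext
        · simp [hyeq]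
        · simp
  · rintro ⟨a, ha, b, hb, habeq⟩
    rw [mem_cone0_prod_zero] at ha
    rw [mem_cone0_prod_one] at hb
    obtain ⟨ha1, ha2⟩ := ha
    obtain ⟨hb1, q, hq, hb2⟩ := hb
    have hfst : a.1 + b.1 = y.1 := congrArg Prod.fst habeq
    have hsnd : a.2 + b.2 = y.2 := congrArg Prod.snd habeq
    have hy2 : y.2 = b.2 := by rw [← hsnd, ha2, zero_add]
    rcases eq_or_lt_of_le hb1 with h0 | hpos
    · left
      have hb10 : b.1 = 0 := by rw [hb2, ← h0, zero_smul]
      have hy1 : y.1 = a.1 := by rw [← hfst, hb10, add_zero]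
      exact ⟨by rw [hy2, ← h0], Or.inr (by rw [hy1]; exact ha1)⟩
    · right
      refine ⟨by rw [hy2]; exact hpos, a.1, Or.inr ha1, q, hq, ?_⟩
      rw [← hfst, hb2, hy2]

end Setup


namespace Setup

variable {n : ℕ} (S : Setup n)

lemma SP_convex (m₀ : V n) : Convex ℝ (S.SP m₀) := by
  intro x hx y hy a b ha hb hab
  refine ⟨S.convex_P hx.1 hy.1 ha hb hab, fun w' hw' => ?_⟩
  rw [pair_add_right, pair_smul_right, pair_smul_right]
  have e1 : a * pair m₀ x ≤ a * pair m₀ w' := mul_le_mul_of_nonneg_left (hx.2 w' hw') ha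
  have e2 : b * pair m₀ y ≤ b * pair m₀ w' := mul_le_mul_of_nonneg_left (hy.2 w' hw') hb
  have e3 : a * pair m₀ w' + b * pair m₀ w' = pair m₀ w' := by rw [← add_mul, hab]; ring
  linarith

lemma SQ_convex (m₀ : V n) : Convex ℝ (S.SQ m₀) := by
  intro x hx y hy a b ha hb hab
  refine ⟨S.convex_Q hx.1 hy.1 ha hb hab, fun w' hw' => ?_⟩
  rw [pair_add_right, pair_smul_right, pair_smul_right]
  have e1 : a * pair m₀ x ≤ a * pair m₀ w' := mul_le_mul_of_nonneg_left (hx.2 w' hw') ha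
  have e2 : b * pair m₀ y ≤ b * pair m₀ w' := mul_le_mul_of_nonneg_left (hy.2 w' hw') hb
  have e3 : a * pair m₀ w' + b * pair m₀ w' = pair m₀ w' := by rw [← add_mul, hab]; ring
  linarith

lemma SP_closed (m₀ : V n) : IsClosed (S.SP m₀) := by
  have : S.SP m₀ = polar S.Δ ∩ ⋂ w' ∈ polar S.Δ, {w | pair m₀ w ≤ pair m₀ w'} := by
    ext w
    simp only [SP, Set.mem_sep_iff, Set.mem_inter_iff, Set.mem_iInter, Set.mem_setOf_eq]
  rw [this]
  exact S.closed_P.inter (isClosed_biInter fun w' _ =>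
    isClosed_le (continuous_pair_left m₀) continuous_const)

lemma SQ_closed (m₀ : V n) : IsClosed (S.SQ m₀) := by
  have : S.SQ m₀ = S.Q ∩ ⋂ w' ∈ S.Q, {w | pair m₀ w ≤ pair m₀ w'} := by
    ext w
    simp only [SQ, Set.mem_sep_iff, Set.mem_inter_iff, Set.mem_iInter, Set.mem_setOf_eq]
  rw [this]
  exact S.closed_Q.inter (isClosed_biInter fun w' _ =>
    isClosed_le (continuous_pair_left m₀) continuous_const)

lemma SP_compact (m₀ : V n) : IsCompact (S.SP m₀) :=
  S.compact_P.of_isClosed_subset (S.SP_closed m₀) fun _ h => h.1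

lemma SQ_compact (m₀ : V n) : IsCompact (S.SQ m₀) :=
  S.compact_Q.of_isClosed_subset (S.SQ_closed m₀) fun _ h => h.1

lemma D_ne_polar {T : Set (V n)} (hT : T.Nonempty) : S.D T ≠ polar S.Δ := by
  intro h
  obtain ⟨m, hm⟩ := hT
  have h0 : (0 : V n) ∈ S.D T := h ▸ S.zero_mem_P
  have := h0.2 m hm
  rw [pair_zero_right] at this
  norm_num at this

lemma exposed_polar_eq_SP {A : Set (V n)} (hA : IsExposed ℝ (polar S.Δ) A)
    (hne : A.Nonempty) : ∃ m, A = S.SP m := by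
  obtain ⟨ℓ, hℓ⟩ := hA hne
  obtain ⟨mr, hmr⟩ := exists_rep ℓ
  refine ⟨-mr, ?_⟩
  rw [hℓ]
  ext x
  simp only [Set.mem_sep_iff, Set.mem_setOf_eq, SP]
  constructor
  · rintro ⟨hx, hmax⟩
    refine ⟨hx, fun w' hw' => ?_⟩
    have := hmax w' hw'
    rw [hmr, hmr] at this
    rw [pair_neg_left, pair_neg_left]
    linarith
  · rintro ⟨hx, hmin⟩
    refine ⟨hx, fun w' hw' => ?_⟩
    have := hmin w' hw'
    rw [pair_neg_left, pair_neg_left] at this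
    rw [hmr, hmr]
    linarith

lemma exposed_Q_eq_SQ {A : Set (V n)} (hA : IsExposed ℝ S.Q A)
    (hne : A.Nonempty) : ∃ m, A = S.SQ m := by
  obtain ⟨ℓ, hℓ⟩ := hA hne
  obtain ⟨mr, hmr⟩ := exists_rep ℓ
  refine ⟨-mr, ?_⟩
  rw [hℓ]
  ext x
  simp only [Set.mem_sep_iff, Set.mem_setOf_eq, SQ]
  constructor
  · rintro ⟨hx, hmax⟩
    refine ⟨hx, fun w' hw' => ?_⟩
    have := hmax w' hw'
    rw [hmr, hmr] at this
    rw [pair_neg_left, pair_neg_left]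
    linarith
  · rintro ⟨hx, hmin⟩
    refine ⟨hx, fun w' hw' => ?_⟩
    have := hmin w' hw'
    rw [pair_neg_left, pair_neg_left] at this
    rw [hmr, hmr]
    linarith

lemma exposed_sum_eq {A : Set (V n)} (hA : IsExposed ℝ (polar S.Δ + S.Q) A)
    (hne : A.Nonempty) : ∃ m, A = S.SP m + S.SQ m := by
  obtain ⟨ℓ, hℓ⟩ := hA hne
  obtain ⟨mr, hmr⟩ := exists_rep ℓ
  refine ⟨-mr, ?_⟩
  rw [S.SP_add_SQ (-mr), hℓ]
  ext x
  simp only [Set.mem_sep_iff, Set.mem_setOf_eq]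
  constructor
  · rintro ⟨hx, hmax⟩
    refine ⟨hx, fun w' hw' => ?_⟩
    have := hmax w' hw'
    rw [hmr, hmr] at this
    rw [pair_neg_left, pair_neg_left]
    linarith
  · rintro ⟨hx, hmin⟩
    refine ⟨hx, fun w' hw' => ?_⟩
    have := hmin w' hw'
    rw [pair_neg_left, pair_neg_left] at this
    rw [hmr, hmr]
    linarith

lemma SQ_smul {c : ℝ} (hc : 0 < c) (m : V n) : S.SQ (c • m) = S.SQ m := by
  ext q
  simp only [SQ, Set.mem_sep_iff]
  constructor
  · rintro ⟨hq, hmin⟩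
    refine ⟨hq, fun q' hq' => ?_⟩
    have := hmin q' hq'
    rw [pair_smul_left, pair_smul_left] at this
    exact le_of_mul_le_mul_left this hc
  · rintro ⟨hq, hmin⟩
    refine ⟨hq, fun q' hq' => ?_⟩
    rw [pair_smul_left, pair_smul_left]
    exact mul_le_mul_of_nonneg_left (hmin q' hq') (le_of_lt hc)

/-- If `0 ∉ SP m₂`, the minimum of `pair m₂` on the polar is negative. -/
lemma SP_min_neg {m₂ : V n} (h0 : (0:V n) ∉ S.SP m₂) {w₁ : V n} (hw₁ : w₁ ∈ S.SP m₂) :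
    pair m₂ w₁ < 0 := by
  by_contra h
  push_neg at h
  apply h0
  refine ⟨S.zero_mem_P, fun w' hw' => ?_⟩
  rw [pair_zero_right]
  exact le_trans h (hw₁.2 w' hw')

/-- Normalization of the exposing functional of a proper face of the polar. -/
lemma SP_normalize {m₂ w₁ : V n} (hw₁ : w₁ ∈ S.SP m₂) (hval : pair m₂ w₁ < 0) :
    ∃ ms ∈ S.Δ, pair ms w₁ = -1 ∧
      S.SP m₂ = {w ∈ polar S.Δ | pair ms w = -1} ∧ S.SQ m₂ = S.SQ ms := by
  set d : ℝ := pair m₂ w₁ with hd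
  set ms : V n := (1/(-d)) • m₂ with hms
  have hcpos : 0 < 1/(-d) := by
    have hnd : 0 < -d := by linarith
    positivity
  have hmsΔ : ms ∈ S.Δ := by
    rw [← S.bipolar]
    intro w hw
    rw [hms, pair_smul_left]
    have h1 : d ≤ pair m₂ w := hw₁.2 w hw
    have h2 : (1/(-d)) * d ≤ (1/(-d)) * pair m₂ w := mul_le_mul_of_nonneg_left h1 (le_of_lt hcpos)
    have h3 : (1/(-d)) * d = -1 := by
      field_simp
      rw [div_self (ne_of_lt hval)]
    linarith
  have hmsval : pair ms w₁ = -1 := by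
    rw [hms, pair_smul_left, ← hd]
    field_simp
    rw [div_self (ne_of_lt hval)]
  refine ⟨ms, hmsΔ, hmsval, ?_, ?_⟩
  · ext w
    simp only [Set.mem_sep_iff, Set.mem_setOf_eq, SP]
    constructor
    · rintro ⟨hw, hmin⟩
      refine ⟨hw, ?_⟩
      have h1 : pair m₂ w = d := le_antisymm (hmin w₁ hw₁.1) (hw₁.2 w hw)
      rw [hms, pair_smul_left, h1]
      field_simp
      rw [div_self (ne_of_lt hval)]
    · rintro ⟨hw, hweq⟩
      refine ⟨hw, fun w' hw' => ?_⟩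
      have h1 : pair m₂ w = d := by
        rw [hms, pair_smul_left] at hweq
        have h2 : (-d) * ((1/(-d)) * pair m₂ w) = (-d) * (-1) := by rw [hweq]
        rw [← mul_assoc] at h2
        have h3 : -d * (1/(-d)) = 1 := by
          rw [mul_one_div, neg_div_neg_eq, div_self (ne_of_lt hval)]
        rw [h3, one_mul] at h2
        linarith
      rw [h1]
      exact hw₁.2 w' hw'
  · rw [hms, S.SQ_smul hcpos]

end Setup


namespace Setup

variable {n : ℕ} (S : Setup n)

lemma Fv_zero : S.Fv 0 = S.Dt := by
  ext p
  simp only [Fv, SΔ, Set.mem_sep_iff, pair_zero_right]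
  exact ⟨fun h => h.1, fun h => ⟨h, h.1, fun _ _ => le_refl _⟩⟩

lemma argmax_eq_Fv {z : V n × ℝ} (hz2 : z.2 = 0) :
    {x ∈ S.Dt | ∀ p ∈ S.Dt, pairP z p ≤ pairP z x} = S.Fv (-z.1) := by
  rw [← S.argminP_v (-z.1)]
  have key : ∀ p : V n × ℝ, pairP ((-z.1 : V n), (0:ℝ)) p = -(pairP z p) := by
    intro p
    simp only [pairP, pair_neg_left, hz2]
    ring
  ext x
  simp only [Set.mem_sep_iff]
  constructor
  · rintro ⟨hx, hmax⟩
    refine ⟨hx, fun p hp => ?_⟩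
    rw [key x, key p]
    exact neg_le_neg (hmax p hp)
  · rintro ⟨hx, hmin⟩
    refine ⟨hx, fun p hp => ?_⟩
    have := hmin p hp
    rw [key x, key p] at this
    linarith

lemma argmax_eq_Fu {z : V n × ℝ} (hz2 : z.2 < 0) :
    {x ∈ S.Dt | ∀ p ∈ S.Dt, pairP z p ≤ pairP z x} = S.Fu ((1/(-z.2)) • (-z.1)) := by
  rw [← S.argminP_u ((1/(-z.2)) • (-z.1))]
  have hpos : 0 < 1/(-z.2) := by
    have : 0 < -z.2 := by linarith
    positivity
  have hne : z.2 ≠ 0 := ne_of_lt hz2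
  have key : ∀ p : V n × ℝ,
      pairP (((1/(-z.2)) • (-z.1) : V n), (1:ℝ)) p = (1/(-z.2)) * (-(pairP z p)) := by
    intro p
    simp only [pairP, pair_smul_left, pair_neg_left, one_mul]
    have e : 1 / -z.2 * -(z.2 * p.2) = p.2 := by
      field_simp
    rw [neg_add, mul_add, e]
  ext x
  simp only [Set.mem_sep_iff]
  constructor
  · rintro ⟨hx, hmax⟩
    refine ⟨hx, fun p hp => ?_⟩
    rw [key x, key p]
    exact mul_le_mul_of_nonneg_left (neg_le_neg (hmax p hp)) (le_of_lt hpos)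
  · rintro ⟨hx, hmin⟩
    refine ⟨hx, fun p hp => ?_⟩
    have h1 := hmin p hp
    rw [key x, key p] at h1
    have h2 := le_of_mul_le_mul_left h1 hpos
    linarith

/-- Realization of a type (i) cone as a normal cone. -/
lemma realize_type1 {σs : Set (V n)} (hexp : IsExposed ℝ (polar S.Δ) σs)
    (hne : σs.Nonempty) (hprop : σs ≠ polar S.Δ) :
    ∃ Fc : Set (V n × ℝ), IsExposed ℝ S.Dt Fc ∧ Fc.Nonempty ∧ Fc ≠ S.Dt ∧
      normalConeP S.Dt Fc = cone0 (σs ×ˢ ({0} : Set ℝ)) := by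
  obtain ⟨m₂, hσ⟩ := S.exposed_polar_eq_SP hexp hne
  have hconv : Convex ℝ σs := hσ ▸ S.SP_convex m₂
  obtain ⟨w₁, hw₁r⟩ := Set.Nonempty.intrinsicInterior hconv hne
  have hw₁σ : w₁ ∈ σs := intrinsicInterior_subset hw₁r
  have h0 : (0 : V n) ∉ σs := by
    intro h
    exact hprop (exposed_eq_of_interior_mem hexp S.zero_int_P h)
  have hw₁ne : w₁ ≠ 0 := fun h => h0 (h ▸ hw₁σ)
  have hval : pair m₂ w₁ < 0 := S.SP_min_neg (fun h => h0 (hσ ▸ h)) (hσ ▸ hw₁σ)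
  obtain ⟨ms, hmsΔ, hmsw₁, hσchar, -⟩ := S.SP_normalize (hσ ▸ hw₁σ) hval
  rw [← hσ] at hσchar
  have hw₁P : w₁ ∈ polar S.Δ := hexp.subset hw₁σ
  -- characterization of SΔ w₁
  have hSΔchar : S.SΔ w₁ = {m ∈ S.Δ | pair m w₁ = -1} := by
    ext m
    simp only [SΔ, Set.mem_sep_iff, Set.mem_setOf_eq]
    constructor
    · rintro ⟨hm, hmin⟩
      refine ⟨hm, le_antisymm ?_ (hw₁P m hm)⟩
      rw [← hmsw₁]
      exact hmin ms hmsΔ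
    · rintro ⟨hm, hmeq⟩
      refine ⟨hm, fun m' hm' => ?_⟩
      rw [hmeq]
      exact hw₁P m' hm'
  have hmsSΔ : ms ∈ S.SΔ w₁ := by
    rw [hSΔchar]
    exact ⟨hmsΔ, hmsw₁⟩
  -- σs = D (SΔ w₁)
  have hkey : S.D (S.SΔ w₁) = σs := by
    apply Set.Subset.antisymm
    · intro w hw
      rw [hσchar]
      exact ⟨hw.1, hw.2 ms hmsSΔ⟩
    · intro w hw
      refine ⟨hexp.subset hw, fun m hm => ?_⟩
      rw [hSΔchar] at hm
      have hlb : ∀ z ∈ σs, (-1 : ℝ) ≤ pair z m := by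
        intro z hz
        rw [pair_comm]
        exact (hexp.subset hz) m hm.1
      have heq : pair w₁ m = -1 := by rw [pair_comm]; exact hm.2
      have := relint_min hw₁r m (-1) hlb heq w hw
      rw [pair_comm] at this
      exact this
  refine ⟨S.Fv w₁, S.isExposed_Fv w₁, S.Fv_nonempty w₁, S.Fv_ne hw₁ne, ?_⟩
  rw [S.NC_Fv hw₁ne, hkey]

/-- Realization of a type (iii) cone as a normal cone. -/
lemma realize_type3 {τ : Set (V n)} (hexp : IsExposed ℝ S.Q τ) (hne : τ.Nonempty) :
    ∃ Fc : Set (V n × ℝ), IsExposed ℝ S.Dt Fc ∧ Fc.Nonempty ∧ Fc ≠ S.Dt ∧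
      normalConeP S.Dt Fc = cone0 (τ ×ˢ ({1} : Set ℝ)) := by
  obtain ⟨m₁, hτ⟩ := S.exposed_Q_eq_SQ hexp hne
  have hconv : Convex ℝ τ := hτ ▸ S.SQ_convex m₁
  obtain ⟨q₁, hq₁r⟩ := Set.Nonempty.intrinsicInterior hconv hne
  have hq₁τ : q₁ ∈ τ := intrinsicInterior_subset hq₁r
  have hq₁Q : q₁ ∈ S.Q := hexp.subset hq₁τ
  have hq₁val : pair m₁ q₁ = -(S.hk m₁) := S.SQ_min_val (hτ ▸ hq₁τ)
  have h0G : (0 : V n) ∈ S.G q₁ := by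
    refine ⟨S.zero_mem_Δ, fun m' hm' => ?_⟩
    rw [pair_zero_left, S.hk_zero]
    have := S.pairQ hq₁Q m'
    linarith
  have hD : S.D (S.G q₁) = ∅ := by
    ext w
    simp only [Set.mem_empty_iff_false, iff_false]
    intro hw
    have := hw.2 0 h0G
    rw [pair_zero_left] at this
    norm_num at this
  have hGval : ∀ m ∈ S.G q₁, pair m q₁ = -(S.hk m) := by
    intro m hm
    have := S.G_const hm h0G
    rw [pair_zero_left, S.hk_zero] at this
    linarith
  have hTQ : S.TQ (S.G q₁) = τ := by
    apply Set.Subset.antisymm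
    · intro q hq
      -- find a small positive multiple of m₁ inside G q₁
      obtain ⟨ε₀, hε₀, hball⟩ := S.ball_sub
      set ε : ℝ := ε₀ / (2 * ‖m₁‖ + 1) with hε
      have hεpos : 0 < ε := by positivity
      have hεm : ε • m₁ ∈ S.Δ := by
        apply hball
        rw [norm_smul, Real.norm_eq_abs, abs_of_pos hεpos, hε]
        rw [div_mul_eq_mul_div]
        rw [div_lt_iff₀ (by positivity)]
        nlinarith [norm_nonneg m₁]
      have hεG : ε • m₁ ∈ S.G q₁ := by
        refine ⟨hεm, fun m' hm' => ?_⟩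
        rw [pair_smul_left, S.hk_smul (le_of_lt hεpos), hq₁val]
        have := S.pairQ hq₁Q m'
        nlinarith
      have h1 := hq.2 _ hεG
      rw [pair_smul_left, S.hk_smul (le_of_lt hεpos)] at h1
      have h2 : pair m₁ q = -(S.hk m₁) := by
        have h3 : ε * pair m₁ q = ε * (-(S.hk m₁)) := by linarith
        exact mul_left_cancel₀ (ne_of_gt hεpos) h3
      rw [hτ]
      refine ⟨hq.1, fun q' hq' => ?_⟩
      rw [h2]
      exact S.pairQ hq' m₁
    · intro q hq
      refine ⟨hexp.subset hq, fun m hm => ?_⟩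
      have hlb : ∀ z ∈ τ, -(S.hk m) ≤ pair z m := by
        intro z hz
        rw [pair_comm]
        exact S.pairQ (hexp.subset hz) m
      have heq : pair q₁ m = -(S.hk m) := by rw [pair_comm]; exact hGval m hm
      have := relint_min hq₁r m (-(S.hk m)) hlb heq q hq
      rw [pair_comm] at this
      exact this
  refine ⟨S.Fu q₁, S.isExposed_Fu q₁, S.Fu_nonempty q₁, S.Fu_ne q₁, ?_⟩
  rw [S.NC_Fu_empty hD, hTQ]

/-- Realization of a type (ii) cone as a normal cone. -/
lemma realize_type2 {σs τ : Set (V n)} (hexpσ : IsExposed ℝ (polar S.Δ) σs)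
    (hneσ : σs.Nonempty) (hpropσ : σs ≠ polar S.Δ)
    (hexpτ : IsExposed ℝ S.Q τ) (hneτ : τ.Nonempty)
    (hsum : IsExposed ℝ (polar S.Δ + S.Q) (σs + τ)) :
    ∃ Fc : Set (V n × ℝ), IsExposed ℝ S.Dt Fc ∧ Fc.Nonempty ∧ Fc ≠ S.Dt ∧
      normalConeP S.Dt Fc = cone0 (σs ×ˢ ({0} : Set ℝ)) + cone0 (τ ×ˢ ({1} : Set ℝ)) := by
  obtain ⟨mσ, hσ0⟩ := S.exposed_polar_eq_SP hexpσ hneσ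
  obtain ⟨mτ, hτ0⟩ := S.exposed_Q_eq_SQ hexpτ hneτ
  obtain ⟨m₂, hστ⟩ := S.exposed_sum_eq hsum (hneσ.add hneτ)
  -- inclusions σs ⊆ SP m₂ and τ ⊆ SQ m₂
  have hincσ : σs ⊆ S.SP m₂ := by
    intro a ha
    obtain ⟨b, hb⟩ := hneτ
    have hmem : a + b ∈ S.SP m₂ + S.SQ m₂ := by
      rw [← hστ]; exact Set.add_mem_add ha hb
    obtain ⟨a', ha', b', hb', habeq⟩ := hmem
    have h1 : pair m₂ a' ≤ pair m₂ a := ha'.2 a (hexpσ.subset ha)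
    have h2 : pair m₂ b' ≤ pair m₂ b := hb'.2 b (hexpτ.subset hb)
    have h3 : pair m₂ a + pair m₂ b = pair m₂ a' + pair m₂ b' := by
      rw [← pair_add_right, ← pair_add_right, show a' + b' = a + b from habeq]
    refine ⟨hexpσ.subset ha, fun x hx => ?_⟩
    have h4 : pair m₂ a = pair m₂ a' := by linarith
    rw [h4]
    exact ha'.2 x hx
  have hincτ : τ ⊆ S.SQ m₂ := by
    intro b hb
    obtain ⟨a, ha⟩ := hneσ
    have hmem : a + b ∈ S.SP m₂ + S.SQ m₂ := by
      rw [← hστ]; exact Set.add_mem_add ha hb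
    obtain ⟨a', ha', b', hb', habeq⟩ := hmem
    have h1 : pair m₂ a' ≤ pair m₂ a := ha'.2 a (hexpσ.subset ha)
    have h2 : pair m₂ b' ≤ pair m₂ b := hb'.2 b (hexpτ.subset hb)
    have h3 : pair m₂ a + pair m₂ b = pair m₂ a' + pair m₂ b' := by
      rw [← pair_add_right, ← pair_add_right, show a' + b' = a + b from habeq]
    refine ⟨hexpτ.subset hb, fun x hx => ?_⟩
    have h4 : pair m₂ b = pair m₂ b' := by linarith
    rw [h4]
    exact hb'.2 x hx
  obtain ⟨hσs, hτs⟩ := sum_faces_unique hneσ hneτ (hσ0 ▸ S.SP_closed mσ)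
    (hσ0 ▸ S.SP_convex mσ) (hτ0 ▸ S.SQ_closed mτ) (hτ0 ▸ S.SQ_convex mτ)
    (S.SP_compact m₂) (S.SQ_compact m₂) hincσ hincτ hστ
  -- relative interior points
  obtain ⟨w₁, hw₁r⟩ := Set.Nonempty.intrinsicInterior (hσ0 ▸ S.SP_convex mσ) hneσ
  obtain ⟨q₁, hq₁r⟩ := Set.Nonempty.intrinsicInterior (hτ0 ▸ S.SQ_convex mτ) hneτ
  have hw₁σ : w₁ ∈ σs := intrinsicInterior_subset hw₁r
  have hq₁τ : q₁ ∈ τ := intrinsicInterior_subset hq₁r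
  have hw₁P : w₁ ∈ polar S.Δ := hexpσ.subset hw₁σ
  have hq₁Q : q₁ ∈ S.Q := hexpτ.subset hq₁τ
  have h0 : (0 : V n) ∉ σs := by
    intro h
    exact hpropσ (exposed_eq_of_interior_mem hexpσ S.zero_int_P h)
  have hval : pair m₂ w₁ < 0 := S.SP_min_neg (fun h => h0 (hσs ▸ h)) (hσs ▸ hw₁σ)
  obtain ⟨ms, hmsΔ, hmsw₁, hσchar, hSQeq⟩ := S.SP_normalize (hσs ▸ hw₁σ) hval
  rw [← hσs] at hσchar
  have hτchar : τ = S.SQ ms := by rw [hτs, hSQeq]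
  have hq₁val : pair ms q₁ = -(S.hk ms) := S.SQ_min_val (hτchar ▸ hq₁τ)
  set u : V n := w₁ + q₁ with hu
  have hlbu : ∀ m' ∈ S.Δ, -1 ≤ pair m' u + S.hk m' := by
    intro m' hm'
    rw [hu, pair_add_right]
    have h1 := hw₁P m' hm'
    have h2 := S.pairQ hq₁Q m'
    linarith
  have hmsG : ms ∈ S.G u := by
    refine ⟨hmsΔ, fun m' hm' => ?_⟩
    have h1 : pair ms u + S.hk ms = -1 := by
      rw [hu, pair_add_right, hmsw₁, hq₁val]
      ring
    rw [h1]
    exact hlbu m' hm'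
  have hGchar : ∀ m ∈ S.G u, pair m w₁ = -1 ∧ pair m q₁ = -(S.hk m) := by
    intro m hm
    have hmval : pair m u + S.hk m = -1 := by
      have h1 := S.G_const hm hmsG
      have h2 : pair ms u + S.hk ms = -1 := by
        rw [hu, pair_add_right, hmsw₁, hq₁val]
        ring
      rw [h1, h2]
    rw [hu, pair_add_right] at hmval
    have h1 := hw₁P m (S.G_subset u hm)
    have h2 := S.pairQ hq₁Q m
    constructor <;> linarith
  have hD : S.D (S.G u) = σs := by
    apply Set.Subset.antisymm
    · intro w hw
      rw [hσchar]
      exact ⟨hw.1, hw.2 ms hmsG⟩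
    · intro w hw
      refine ⟨hexpσ.subset hw, fun m hm => ?_⟩
      have hlb : ∀ z ∈ σs, (-1 : ℝ) ≤ pair z m := by
        intro z hz
        rw [pair_comm]
        exact (hexpσ.subset hz) m (S.G_subset u hm)
      have heq : pair w₁ m = -1 := by rw [pair_comm]; exact (hGchar m hm).1
      have := relint_min hw₁r m (-1) hlb heq w hw
      rw [pair_comm] at this
      exact this
  have hT : S.TQ (S.G u) = τ := by
    apply Set.Subset.antisymm
    · intro q hq
      rw [hτchar]
      refine ⟨hq.1, fun q' hq' => ?_⟩
      rw [hq.2 ms hmsG]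
      exact S.pairQ hq' ms
    · intro q hq
      refine ⟨hexpτ.subset hq, fun m hm => ?_⟩
      have hlb : ∀ z ∈ τ, -(S.hk m) ≤ pair z m := by
        intro z hz
        rw [pair_comm]
        exact S.pairQ (hexpτ.subset hz) m
      have heq : pair q₁ m = -(S.hk m) := by rw [pair_comm]; exact (hGchar m hm).2
      have := relint_min hq₁r m (-(S.hk m)) hlb heq q hq
      rw [pair_comm] at this
      exact this
  have hDne : (S.D (S.G u)).Nonempty := hD ▸ hneσ
  refine ⟨S.Fu u, S.isExposed_Fu u, S.Fu_nonempty u, S.Fu_ne u, ?_⟩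
  rw [S.NC_Fu_nonempty hDne, hD, hT]

end Setup


theorem stmt15 {n : ℕ} (Δ : Set (V n))
    (hΔrefl : IsReflexive Δ)
    -- ȟ' convex positively homogeneous piecewise linear
    (hk : V n → ℝ) (F : Finset (V n)) (hF : F.Nonempty)
    (hpl : ∀ x, hk x = F.sup' hF fun f => -(pair x f))
    -- Q = ∇^{ȟ'}, containing 0
    (Q : Set (V n)) (hQ : Q = {v : V n | ∀ m, -(hk m) ≤ pair m v})
    (h0Q : (0 : V n) ∈ Q)
    -- Δ̃ = {(m,l) | m ∈ Δ, l ≥ ȟ'(m)}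
    (Δt : Set (V n × ℝ)) (hΔt : Δt = {p : V n × ℝ | p.1 ∈ Δ ∧ hk p.1 ≤ p.2}) :
    -- the normal fan Σ̃ of Δ̃ (the normal cones to its proper faces) consists
    -- exactly of the three listed families of cones
    {C : Set (V n × ℝ) | ∃ Fc : Set (V n × ℝ), IsFaceOf Fc Δt ∧ Fc.Nonempty ∧ Fc ≠ Δt ∧
        C = normalConeP Δt Fc}
      = {C | ∃ σs : Set (V n), IsFaceOf σs (polar Δ) ∧ σs.Nonempty ∧ σs ≠ polar Δ ∧
            C = cone0 (σs ×ˢ ({0} : Set ℝ))}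
        ∪ {C | ∃ σs τ : Set (V n), IsFaceOf σs (polar Δ) ∧ σs.Nonempty ∧ σs ≠ polar Δ ∧
            IsFaceOf τ Q ∧ τ.Nonempty ∧ IsFaceOf (σs + τ) (polar Δ + Q) ∧
            C = cone0 (σs ×ˢ ({0} : Set ℝ)) + cone0 (τ ×ˢ ({1} : Set ℝ))}
        ∪ {C | ∃ τ : Set (V n), IsFaceOf τ Q ∧ τ.Nonempty ∧
            C = cone0 (τ ×ˢ ({1} : Set ℝ))} := by
  obtain ⟨⟨Sfin, -, hSfin⟩, h0int, ⟨Pfin, -, hPfin⟩⟩ := hΔrefl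
  set S : Setup n := ⟨Δ, hk, F, hF, hpl, Q, hQ, h0Q, Sfin, hSfin, Pfin, hPfin, h0int⟩ with hS
  have hDt : Δt = S.Dt := by rw [hΔt]; rfl
  ext C
  simp only [Set.mem_union, Set.mem_setOf_eq]
  constructor
  · rintro ⟨Fc, hexp, hne, hprop, rfl⟩
    have hexp' : IsExposed ℝ S.Dt Fc := hDt ▸ hexp
    obtain ⟨ℓ, hFc⟩ := hexp' hne
    obtain ⟨z, hz⟩ := exists_repP ℓ
    have hFc' : Fc = {x ∈ S.Dt | ∀ p ∈ S.Dt, pairP z p ≤ pairP z x} := by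
      rw [hFc]
      ext x
      simp only [Set.mem_setOf_eq, Set.mem_sep_iff, hz]
    rcases lt_trichotomy z.2 0 with hz2 | hz2 | hz2
    · -- the exposing functional has negative last coordinate: `Fu` case
      set u : V n := (1/(-z.2)) • (-z.1) with hu
      have hFcu : Fc = S.Fu u := by rw [hFc', S.argmax_eq_Fu hz2]
      by_cases hD : (S.D (S.G u)).Nonempty
      · left; right
        obtain ⟨m₀, hm₀⟩ := Set.Nonempty.intrinsicInterior (S.G_convex u) (S.G_nonempty u)
        have hDeq : S.D (S.G u) = S.SP m₀ := S.D_eq_SP (S.G_subset u) hm₀ hD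
        have hTeq : S.TQ (S.G u) = S.SQ m₀ := S.TQ_eq_SQ hm₀
        refine ⟨S.D (S.G u), S.TQ (S.G u), ?_, hD, S.D_ne_polar (S.G_nonempty u),
          ?_, S.TQ_G_nonempty u, ?_, ?_⟩
        · rw [hDeq]; exact S.isExposed_SP m₀
        · rw [hTeq]; exact S.isExposed_SQ m₀
        · rw [hDeq, hTeq]; exact S.isExposed_SP_add_SQ m₀
        · rw [hDt, hFcu, S.NC_Fu_nonempty hD]
      · right
        have hDe : S.D (S.G u) = ∅ := Set.not_nonempty_iff_eq_empty.mp hD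
        obtain ⟨m₀, hm₀⟩ := Set.Nonempty.intrinsicInterior (S.G_convex u) (S.G_nonempty u)
        have hTeq : S.TQ (S.G u) = S.SQ m₀ := S.TQ_eq_SQ hm₀
        refine ⟨S.TQ (S.G u), ?_, S.TQ_G_nonempty u, ?_⟩
        · rw [hTeq]; exact S.isExposed_SQ m₀
        · rw [hDt, hFcu, S.NC_Fu_empty hDe]
    · -- last coordinate zero: `Fv` case
      by_cases hz1 : z.1 = 0
      · exact absurd (by rw [hFc', S.argmax_eq_Fv hz2, hz1, neg_zero, S.Fv_zero, ← hDt]) hprop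
      · left; left
        have hvne : (-z.1 : V n) ≠ 0 := neg_ne_zero.mpr hz1
        have hFcv : Fc = S.Fv (-z.1) := by rw [hFc', S.argmax_eq_Fv hz2]
        obtain ⟨m₀, hm₀⟩ :=
          Set.Nonempty.intrinsicInterior (S.SΔ_convex (-z.1)) (S.SΔ_nonempty (-z.1))
        have hDne := S.D_SΔ_nonempty hvne
        have hDeq : S.D (S.SΔ (-z.1)) = S.SP m₀ := S.D_eq_SP (S.SΔ_subset _) hm₀ hDne
        refine ⟨S.D (S.SΔ (-z.1)), ?_, hDne, S.D_ne_polar (S.SΔ_nonempty _), ?_⟩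
        · rw [hDeq]; exact S.isExposed_SP m₀
        · rw [hDt, hFcv, S.NC_Fv hvne]
    · -- positive last coordinate: impossible
      exfalso
      obtain ⟨f, hf⟩ := hne
      have hf' : f ∈ {x ∈ S.Dt | ∀ p ∈ S.Dt, pairP z p ≤ pairP z x} := hFc' ▸ hf
      have hp : ((f.1, f.2 + 1) : V n × ℝ) ∈ S.Dt := by
        refine ⟨hf'.1.1, ?_⟩
        have := hf'.1.2
        show S.hk f.1 ≤ f.2 + 1
        linarith
      have := hf'.2 _ hp
      simp only [pairP] at this
      nlinarith
  · rintro ((⟨σs, hexp, hne, hprop, rfl⟩ |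
      ⟨σs, τ, hexpσ, hneσ, hpropσ, hexpτ, hneτ, hsum, rfl⟩) | ⟨τ, hexpτ, hneτ, rfl⟩)
    · obtain ⟨Fc, h1, h2, h3, h4⟩ := S.realize_type1 hexp hne hprop
      exact ⟨Fc, hDt ▸ h1, h2, by rw [hDt]; exact h3, by rw [hDt, h4]⟩
    · obtain ⟨Fc, h1, h2, h3, h4⟩ := S.realize_type2 hexpσ hneσ hpropσ hexpτ hneτ hsum
      exact ⟨Fc, hDt ▸ h1, h2, by rw [hDt]; exact h3, by rw [hDt, h4]⟩
    · obtain ⟨Fc, h1, h2, h3, h4⟩ := S.realize_type3 hexpτ hneτ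
      exact ⟨Fc, hDt ▸ h1, h2, by rw [hDt]; exact h3, by rw [hDt, h4]⟩


end BB
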